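/- arXiv:2506.23953 — 2 statements merged into one kernel-verified Lean document; each statement's English description precedes it below -/
import Mathlib

section
/- The Fock-space operators a_i^± (i = 1,…,m+n) defined by the explicit actions on the orthonormal basis of W_p satisfy the defining triple relations of sl(m₁+1,m₂|n₁,n₂): ⟦a_i^ξ, a_j^ξ⟧ = 0 for ξ = ±; ⟦⟦a_i^+, a_j^-⟧, a_k^+⟧ = δ_{jk} a_i^+ + (−1)^{d_i·d_i} δ_{ij} a_k^+; and ⟦⟦a_i^+, a_j^-⟧, a_k^-⟧ = −(−1)^{(d_i+d_j)·d_k} δ_{ik} a_j^- − (−1)^{d_i·d_i} δ_{ij} a_k^-, for all i,j,k ∈ {1,…,m+n}, where ⟦X,Y⟧ = XY − (−1)^{deg X · deg Y} YX. -/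
/-- Labels of the Fock basis vectors: occupation numbers
`r₁,…,r_{m₁}, l₁,…,l_{m₂}, θ₁,…,θ_{n₁}, λ₁,…,λ_{n₂}`. -/
structure FLabel (m₁ m₂ n₁ n₂ : ℕ) where
  r : Fin m₁ → ℕ
  l : Fin m₂ → ℕ
  th : Fin n₁ → ℕ
  la : Fin n₂ → ℕ

/-- The total occupation number `R = Σr + Σl + Σθ + Σλ`. -/
def FLabel.R {m₁ m₂ n₁ n₂ : ℕ} (x : FLabel m₁ m₂ n₁ n₂) : ℕ :=
  (∑ i, x.r i) + (∑ i, x.l i) + (∑ i, x.th i) + (∑ i, x.la i)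

/-- Valid labels: `θ_i, λ_i ∈ {0,1}` and `R ≤ p`. -/
def FLabel.Valid {m₁ m₂ n₁ n₂ : ℕ} (p : ℕ) (x : FLabel m₁ m₂ n₁ n₂) : Prop :=
  (∀ i, x.th i ≤ 1) ∧ (∀ i, x.la i ≤ 1) ∧ x.R ≤ p

/-- The index set of the orthonormal basis of `W_p`. -/
def FIdx (m₁ m₂ n₁ n₂ p : ℕ) := {x : FLabel m₁ m₂ n₁ n₂ // x.Valid p}

/-- The Fock space `W_p`: the real vector space with basis indexed by `FIdx`,
realized as finitely supported functions; the basis vector at `x` is `Finsupp.single x 1`. -/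
abbrev W (m₁ m₂ n₁ n₂ p : ℕ) := FIdx m₁ m₂ n₁ n₂ p →₀ ℝ

/-- Extend a map defined on basis vectors to a linear operator on `W_p`. -/
noncomputable def extOp {m₁ m₂ n₁ n₂ p : ℕ}
    (g : FIdx m₁ m₂ n₁ n₂ p → W m₁ m₂ n₁ n₂ p) :
    W m₁ m₂ n₁ n₂ p →ₗ[ℝ] W m₁ m₂ n₁ n₂ p :=
  Finsupp.lsum ℝ fun x => LinearMap.toSpanSingleton ℝ _ (g x)

open Classical in
/-- `c` times the basis vector labelled `x'` if `x'` is a valid label, and `0` otherwise. -/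
noncomputable def bvec {m₁ m₂ n₁ n₂ : ℕ} (p : ℕ) (x' : FLabel m₁ m₂ n₁ n₂) (c : ℝ) :
    W m₁ m₂ n₁ n₂ p :=
  if h : x'.Valid p then c • Finsupp.single ⟨x', h⟩ 1 else 0

/-- `b_i^+`. -/
noncomputable def bP {m₁ m₂ n₁ n₂ p : ℕ} (i : Fin m₁) :
    W m₁ m₂ n₁ n₂ p →ₗ[ℝ] W m₁ m₂ n₁ n₂ p :=
  extOp fun x =>
    bvec p { x.1 with r := Function.update x.1.r i (x.1.r i + 1) }
      (Real.sqrt (((x.1.r i + 1) * (p - x.1.R) : ℕ) : ℝ))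

/-- `b_i^-`. -/
noncomputable def bM {m₁ m₂ n₁ n₂ p : ℕ} (i : Fin m₁) :
    W m₁ m₂ n₁ n₂ p →ₗ[ℝ] W m₁ m₂ n₁ n₂ p :=
  extOp fun x =>
    bvec p { x.1 with r := Function.update x.1.r i (x.1.r i - 1) }
      (Real.sqrt ((x.1.r i * (p - x.1.R + 1) : ℕ) : ℝ))

/-- `b̃_i^+`. -/
noncomputable def btP {m₁ m₂ n₁ n₂ p : ℕ} (i : Fin m₂) :
    W m₁ m₂ n₁ n₂ p →ₗ[ℝ] W m₁ m₂ n₁ n₂ p :=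
  extOp fun x =>
    bvec p { x.1 with l := Function.update x.1.l i (x.1.l i + 1) }
      (Real.sqrt (((x.1.l i + 1) * (p - x.1.R) : ℕ) : ℝ))

/-- `b̃_i^-`. -/
noncomputable def btM {m₁ m₂ n₁ n₂ p : ℕ} (i : Fin m₂) :
    W m₁ m₂ n₁ n₂ p →ₗ[ℝ] W m₁ m₂ n₁ n₂ p :=
  extOp fun x =>
    bvec p { x.1 with l := Function.update x.1.l i (x.1.l i - 1) }
      (Real.sqrt ((x.1.l i * (p - x.1.R + 1) : ℕ) : ℝ))

/-- The sign `(−1)^{l₁+⋯+l_{m₂}}`. -/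
noncomputable def sgnl {m₁ m₂ n₁ n₂ : ℕ} (x : FLabel m₁ m₂ n₁ n₂) : ℝ :=
  (-1 : ℝ) ^ (∑ i, x.l i)

/-- The sign `(−1)^{θ₁+⋯+θ_{i−1}}`. -/
noncomputable def sgnth {m₁ m₂ n₁ n₂ : ℕ} (x : FLabel m₁ m₂ n₁ n₂) (i : Fin n₁) : ℝ :=
  (-1 : ℝ) ^ (∑ j ∈ Finset.Iio i, x.th j)

/-- The sign `(−1)^{λ₁+⋯+λ_{i−1}}`. -/
noncomputable def sgnla {m₁ m₂ n₁ n₂ : ℕ} (x : FLabel m₁ m₂ n₁ n₂) (i : Fin n₂) : ℝ :=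
  (-1 : ℝ) ^ (∑ j ∈ Finset.Iio i, x.la j)

/-- `f_i^+`. -/
noncomputable def fP {m₁ m₂ n₁ n₂ p : ℕ} (i : Fin n₁) :
    W m₁ m₂ n₁ n₂ p →ₗ[ℝ] W m₁ m₂ n₁ n₂ p :=
  extOp fun x =>
    bvec p { x.1 with th := Function.update x.1.th i (x.1.th i + 1) }
      (((1 : ℝ) - (x.1.th i : ℝ)) * sgnl x.1 * sgnth x.1 i *
        Real.sqrt ((p - x.1.R : ℕ) : ℝ))

/-- `f_i^-`. -/
noncomputable def fM {m₁ m₂ n₁ n₂ p : ℕ} (i : Fin n₁) :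
    W m₁ m₂ n₁ n₂ p →ₗ[ℝ] W m₁ m₂ n₁ n₂ p :=
  extOp fun x =>
    bvec p { x.1 with th := Function.update x.1.th i (x.1.th i - 1) }
      ((x.1.th i : ℝ) * sgnl x.1 * sgnth x.1 i *
        Real.sqrt ((p - x.1.R + 1 : ℕ) : ℝ))

/-- `f̃_i^+`. -/
noncomputable def ftP {m₁ m₂ n₁ n₂ p : ℕ} (i : Fin n₂) :
    W m₁ m₂ n₁ n₂ p →ₗ[ℝ] W m₁ m₂ n₁ n₂ p :=
  extOp fun x =>
    bvec p { x.1 with la := Function.update x.1.la i (x.1.la i + 1) }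
      (((1 : ℝ) - (x.1.la i : ℝ)) * sgnl x.1 * sgnla x.1 i *
        Real.sqrt ((p - x.1.R : ℕ) : ℝ))

/-- `f̃_i^-`. -/
noncomputable def ftM {m₁ m₂ n₁ n₂ p : ℕ} (i : Fin n₂) :
    W m₁ m₂ n₁ n₂ p →ₗ[ℝ] W m₁ m₂ n₁ n₂ p :=
  extOp fun x =>
    bvec p { x.1 with la := Function.update x.1.la i (x.1.la i - 1) }
      ((x.1.la i : ℝ) * sgnl x.1 * sgnla x.1 i *
        Real.sqrt ((p - x.1.R + 1 : ℕ) : ℝ))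

/-- The creation operators `a_i^+`, `i = 1, …, m+n` (here indexed by `Fin (m+n)`). -/
noncomputable def aP {m₁ m₂ n₁ n₂ p : ℕ} (i : Fin (m₁+m₂+n₁+n₂)) :
    W m₁ m₂ n₁ n₂ p →ₗ[ℝ] W m₁ m₂ n₁ n₂ p :=
  if h1 : i.val < m₁ then bP ⟨i.val, h1⟩
  else if h2 : i.val < m₁ + m₂ then btP ⟨i.val - m₁, by omega⟩
  else if h3 : i.val < m₁ + m₂ + n₁ then fP ⟨i.val - (m₁ + m₂), by omega⟩
  else ftP ⟨i.val - (m₁ + m₂ + n₁), by have := i.isLt; omega⟩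

/-- The annihilation operators `a_i^-`, `i = 1, …, m+n` (here indexed by `Fin (m+n)`). -/
noncomputable def aM {m₁ m₂ n₁ n₂ p : ℕ} (i : Fin (m₁+m₂+n₁+n₂)) :
    W m₁ m₂ n₁ n₂ p →ₗ[ℝ] W m₁ m₂ n₁ n₂ p :=
  if h1 : i.val < m₁ then bM ⟨i.val, h1⟩
  else if h2 : i.val < m₁ + m₂ then btM ⟨i.val - m₁, by omega⟩
  else if h3 : i.val < m₁ + m₂ + n₁ then fM ⟨i.val - (m₁ + m₂), by omega⟩
  else ftM ⟨i.val - (m₁ + m₂ + n₁), by have := i.isLt; omega⟩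

/-- The degree `d_i ∈ ℤ₂×ℤ₂` of `a_i^±`. -/
def deg {m₁ m₂ n₁ n₂ : ℕ} (i : Fin (m₁+m₂+n₁+n₂)) : ZMod 2 × ZMod 2 :=
  if i.val < m₁ then (0, 0)
  else if i.val < m₁ + m₂ then (1, 1)
  else if i.val < m₁ + m₂ + n₁ then (1, 0)
  else (0, 1)

/-- The sign `(−1)^{a·b}` with `a·b = a₁b₁ + a₂b₂ ∈ ℤ₂`. -/
noncomputable def sgn (a b : ZMod 2 × ZMod 2) : ℝ :=
  (-1 : ℝ) ^ (a.1 * b.1 + a.2 * b.2 : ZMod 2).val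

/-- The bracket `⟦X,Y⟧ = X∘Y − (−1)^{a·b} Y∘X` of operators of degrees `a`, `b`. -/
noncomputable def bb {m₁ m₂ n₁ n₂ p : ℕ} (a b : ZMod 2 × ZMod 2)
    (X Y : W m₁ m₂ n₁ n₂ p →ₗ[ℝ] W m₁ m₂ n₁ n₂ p) :
    W m₁ m₂ n₁ n₂ p →ₗ[ℝ] W m₁ m₂ n₁ n₂ p :=
  X ∘ₗ Y - sgn a b • (Y ∘ₗ X)

namespace Fock

variable {m₁ m₂ n₁ n₂ : ℕ}

@[ext] lemma FLabel.ext {x y : FLabel m₁ m₂ n₁ n₂} (hr : x.r = y.r) (hl : x.l = y.l)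
    (hth : x.th = y.th) (hla : x.la = y.la) : x = y := by
  cases x; cases y; simp_all

/-- uniform occupation number -/
def occ (x : FLabel m₁ m₂ n₁ n₂) (i : Fin (m₁+m₂+n₁+n₂)) : ℕ :=
  if h1 : i.val < m₁ then x.r ⟨i.val, h1⟩
  else if h2 : i.val < m₁ + m₂ then x.l ⟨i.val - m₁, by omega⟩
  else if h3 : i.val < m₁ + m₂ + n₁ then x.th ⟨i.val - (m₁ + m₂), by omega⟩
  else x.la ⟨i.val - (m₁ + m₂ + n₁), by have := i.isLt; omega⟩

/-- set occupation number -/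
def stOcc (x : FLabel m₁ m₂ n₁ n₂) (i : Fin (m₁+m₂+n₁+n₂)) (v : ℕ) : FLabel m₁ m₂ n₁ n₂ :=
  if h1 : i.val < m₁ then { x with r := Function.update x.r ⟨i.val, h1⟩ v }
  else if h2 : i.val < m₁ + m₂ then { x with l := Function.update x.l ⟨i.val - m₁, by omega⟩ v }
  else if h3 : i.val < m₁ + m₂ + n₁ then
    { x with th := Function.update x.th ⟨i.val - (m₁ + m₂), by omega⟩ v }
  else { x with la := Function.update x.la ⟨i.val - (m₁ + m₂ + n₁), by have := i.isLt; omega⟩ v }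

lemma occ_stOcc_self (x : FLabel m₁ m₂ n₁ n₂) (i : Fin (m₁+m₂+n₁+n₂)) (v : ℕ) :
    occ (stOcc x i v) i = v := by
  unfold occ stOcc
  split_ifs <;> simp

lemma occ_stOcc_ne (x : FLabel m₁ m₂ n₁ n₂) {i j : Fin (m₁+m₂+n₁+n₂)} (hij : i ≠ j) (v : ℕ) :
    occ (stOcc x j v) i = occ x i := by
  have hij' : i.val ≠ j.val := fun h => hij (Fin.ext h)
  unfold occ stOcc
  split_ifs <;>
    first
    | rfl
    | (simp_all [Function.update_apply, Fin.mk.injEq]; try (intro h; omega))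
    | omega

lemma stOcc_comm (x : FLabel m₁ m₂ n₁ n₂) {i j : Fin (m₁+m₂+n₁+n₂)} (hij : i ≠ j) (v w : ℕ) :
    stOcc (stOcc x j w) i v = stOcc (stOcc x i v) j w := by
  have hij' : i.val ≠ j.val := fun h => hij (Fin.ext h)
  unfold stOcc
  split_ifs <;> simp_all <;>
    (apply Function.update_comm; simp; omega)

lemma stOcc_stOcc_self (x : FLabel m₁ m₂ n₁ n₂) (i : Fin (m₁+m₂+n₁+n₂)) (v w : ℕ) :
    stOcc (stOcc x i w) i v = stOcc x i v := by
  unfold stOcc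
  split_ifs <;> simp_all

lemma stOcc_occ_self (x : FLabel m₁ m₂ n₁ n₂) (i : Fin (m₁+m₂+n₁+n₂)) :
    stOcc x i (occ x i) = x := by
  unfold stOcc occ
  split_ifs <;> simp_all [Function.update_eq_self] <;> ext <;> simp_all [Function.update_eq_self]

lemma R_stOcc (x : FLabel m₁ m₂ n₁ n₂) (i : Fin (m₁+m₂+n₁+n₂)) (v : ℕ) :
    (stOcc x i v).R + occ x i = x.R + v := by
  unfold stOcc occ FLabel.R
  split_ifs <;>
    simp_all [Finset.sum_update_of_mem, Finset.sdiff_singleton_eq_erase] <;>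
    [ (have h' := Finset.sum_erase_add Finset.univ x.r (Finset.mem_univ (⟨i.val, by omega⟩ : Fin m₁)));
      (have h' := Finset.sum_erase_add Finset.univ x.l (Finset.mem_univ (⟨i.val - m₁, by omega⟩ : Fin m₂)));
      (have h' := Finset.sum_erase_add Finset.univ x.th (Finset.mem_univ (⟨i.val - (m₁+m₂), by omega⟩ : Fin n₁)));
      (have h' := Finset.sum_erase_add Finset.univ x.la (Finset.mem_univ (⟨i.val - (m₁+m₂+n₁), by omega⟩ : Fin n₂)))] <;>
    omega

end Fock
namespace Fock

variable {m₁ m₂ n₁ n₂ p : ℕ}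

lemma occ_le_R (x : FLabel m₁ m₂ n₁ n₂) (i : Fin (m₁+m₂+n₁+n₂)) : occ x i ≤ x.R := by
  unfold occ FLabel.R
  have h1 : ∀ (a : Fin m₁), x.r a ≤ ∑ t, x.r t :=
    fun a => Finset.single_le_sum (fun t _ => Nat.zero_le _) (Finset.mem_univ a)
  have h2 : ∀ (a : Fin m₂), x.l a ≤ ∑ t, x.l t :=
    fun a => Finset.single_le_sum (fun t _ => Nat.zero_le _) (Finset.mem_univ a)
  have h3 : ∀ (a : Fin n₁), x.th a ≤ ∑ t, x.th t :=
    fun a => Finset.single_le_sum (fun t _ => Nat.zero_le _) (Finset.mem_univ a)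
  have h4 : ∀ (a : Fin n₂), x.la a ≤ ∑ t, x.la t :=
    fun a => Finset.single_le_sum (fun t _ => Nat.zero_le _) (Finset.mem_univ a)
  split_ifs <;> [exact le_trans (h1 _) (by omega); exact le_trans (h2 _) (by omega);
    exact le_trans (h3 _) (by omega); exact le_trans (h4 _) (by omega)]

lemma occ_le_one {x : FLabel m₁ m₂ n₁ n₂} (hx : x.Valid p) {i : Fin (m₁+m₂+n₁+n₂)}
    (hi : m₁ + m₂ ≤ i.val) : occ x i ≤ 1 := by
  obtain ⟨h1, h2, _⟩ := hx
  unfold occ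
  split_ifs <;> first | omega | exact h1 _ | exact h2 _

lemma valid_stOcc {x : FLabel m₁ m₂ n₁ n₂} (hx : x.Valid p) {i : Fin (m₁+m₂+n₁+n₂)} {v : ℕ}
    (hv : m₁ + m₂ ≤ i.val → v ≤ 1) (hR : x.R + v ≤ p + occ x i) :
    (stOcc x i v).Valid p := by
  obtain ⟨h1, h2, h3⟩ := hx
  have hR' : (stOcc x i v).R ≤ p := by have := R_stOcc x i v; omega
  refine ⟨?_, ?_, hR'⟩ <;> intro a <;> unfold stOcc <;> split_ifs <;>
    simp only [Function.update_apply] <;> first | exact h1 a | exact h2 a |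
      (split_ifs <;> first | exact h1 a | exact h2 a | (apply hv; omega))

def sg (x : FLabel m₁ m₂ n₁ n₂) (i : Fin (m₁+m₂+n₁+n₂)) : ℕ :=
  if _h : i.val < m₁ + m₂ then 0
  else if h3 : i.val < m₁ + m₂ + n₁ then
    (∑ t, x.l t) + ∑ j ∈ Finset.Iio (⟨i.val - (m₁+m₂), by omega⟩ : Fin n₁), x.th j
  else (∑ t, x.l t) +
    ∑ j ∈ Finset.Iio (⟨i.val - (m₁+m₂+n₁), by have := i.isLt; omega⟩ : Fin n₂), x.la j

noncomputable def eps (x : FLabel m₁ m₂ n₁ n₂) (i : Fin (m₁+m₂+n₁+n₂)) : ℝ :=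
  (-1) ^ (sg x i)

/-- `j` influences the sign of mode `i` -/
def sS (i j : Fin (m₁+m₂+n₁+n₂)) : Prop :=
  (m₁+m₂ ≤ i.val ∧ m₁ ≤ j.val ∧ j.val < m₁+m₂) ∨
  (m₁+m₂ ≤ j.val ∧ j.val < i.val ∧ (i.val < m₁+m₂+n₁ ↔ j.val < m₁+m₂+n₁))

instance (i j : Fin (m₁+m₂+n₁+n₂)) : Decidable (sS i j) := by unfold sS; infer_instance

noncomputable def sf (i j : Fin (m₁+m₂+n₁+n₂)) : ℝ := if sS i j then -1 else 1

lemma sf_self (i : Fin (m₁+m₂+n₁+n₂)) : sf i i = 1 := by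
  unfold sf; rw [if_neg]; unfold sS; rintro (⟨h1,_,h2⟩ | ⟨_,h2,_⟩) <;> omega

lemma sf_bos {i : Fin (m₁+m₂+n₁+n₂)} (h : i.val < m₁ + m₂) (j : Fin (m₁+m₂+n₁+n₂)) :
    sf i j = 1 := by
  unfold sf; rw [if_neg]; unfold sS; rintro (⟨h1,_,h2⟩ | ⟨h1,h2,_⟩) <;> omega

lemma sf_sq (i j : Fin (m₁+m₂+n₁+n₂)) : sf i j * sf i j = 1 := by
  unfold sf; split_ifs <;> norm_num

lemma sf_pow_odd {n : ℕ} (hn : n % 2 = 1) (i j : Fin (m₁+m₂+n₁+n₂)) : (sf i j) ^ n = sf i j := by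
  unfold sf; split_ifs <;> [skip; simp]
  rw [← Nat.div_add_mod n 2, hn, pow_add, pow_mul, neg_one_sq, one_pow, pow_one, one_mul]

end Fock
namespace Fock

variable {m₁ m₂ n₁ n₂ p : ℕ}

lemma np {m n : ℕ} (h : m % 2 = n % 2) : (-1:ℝ)^m = (-1)^n := by
  rw [← Nat.div_add_mod m 2, ← Nat.div_add_mod n 2, h, pow_add, pow_add, pow_mul, pow_mul,
    neg_one_sq, one_pow, one_pow]

lemma sg_stOcc (x : FLabel m₁ m₂ n₁ n₂) (i j : Fin (m₁+m₂+n₁+n₂)) (v : ℕ) :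
    sg (stOcc x j v) i + (if sS i j then occ x j else 0)
      = sg x i + (if sS i j then v else 0) := by
  have hsum : ∀ {n : ℕ} (f : Fin n → ℕ) (s : Finset (Fin n)) (b : Fin n), b ∈ s → ∀ (v : ℕ),
      (∑ t ∈ s, Function.update f b v t) + f b = (∑ t ∈ s, f t) + v := by
    intro n f s b hb v
    rw [Finset.sum_update_of_mem hb, Finset.sdiff_singleton_eq_erase]
    have := Finset.sum_erase_add s f hb
    omega
  by_cases hi1 : i.val < m₁ + m₂
  · have hS : ¬ sS i j := by rintro (⟨h,_,_⟩|⟨_,h,_⟩) <;> omega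
    simp only [if_neg hS]
    have e1 : sg (stOcc x j v) i = 0 := by unfold sg; rw [dif_pos hi1]
    have e2 : sg x i = 0 := by unfold sg; rw [dif_pos hi1]
    omega
  by_cases hj1 : j.val < m₁
  · -- j in r-region: no field of sg changes, sS false
    have hS : ¬ sS i j := by rintro (⟨_,h,_⟩|⟨h,_,_⟩) <;> omega
    simp only [if_neg hS]
    have e1 : stOcc x j v = { x with r := Function.update x.r ⟨j.val, hj1⟩ v } := by
      unfold stOcc; rw [dif_pos hj1]
    have el : (stOcc x j v).l = x.l := by rw [e1]
    have eth : (stOcc x j v).th = x.th := by rw [e1]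
    have ela : (stOcc x j v).la = x.la := by rw [e1]
    unfold sg
    rw [dif_neg hi1, dif_neg hi1]
    split_ifs <;> rw [el] <;> [rw [eth]; rw [ela]]
  by_cases hj2 : j.val < m₁ + m₂
  · -- j in l-region: Σl changes, sS true
    have hS : sS i j := Or.inl ⟨by omega, by omega, hj2⟩
    simp only [if_pos hS]
    have e1 : stOcc x j v = { x with l := Function.update x.l ⟨j.val - m₁, by omega⟩ v } := by
      unfold stOcc; rw [dif_neg (by omega), dif_pos hj2]
    have el : (stOcc x j v).l = Function.update x.l ⟨j.val - m₁, by omega⟩ v := by rw [e1]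
    have eth : (stOcc x j v).th = x.th := by rw [e1]
    have ela : (stOcc x j v).la = x.la := by rw [e1]
    have e2 : occ x j = x.l ⟨j.val - m₁, by omega⟩ := by
      unfold occ; rw [dif_neg (by omega), dif_pos hj2]
    rw [e2]
    unfold sg
    rw [dif_neg hi1, dif_neg hi1]
    have key := hsum x.l Finset.univ ⟨j.val - m₁, by omega⟩ (Finset.mem_univ _) v
    split_ifs <;> rw [el] <;> [rw [eth]; rw [ela]] <;> omega
  by_cases hj3 : j.val < m₁ + m₂ + n₁
  · -- j in θ-region
    have e1 : stOcc x j v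
        = { x with th := Function.update x.th ⟨j.val - (m₁+m₂), by omega⟩ v } := by
      unfold stOcc; rw [dif_neg (by omega), dif_neg (by omega), dif_pos hj3]
    have el : (stOcc x j v).l = x.l := by rw [e1]
    have eth : (stOcc x j v).th = Function.update x.th ⟨j.val - (m₁+m₂), by omega⟩ v := by rw [e1]
    have ela : (stOcc x j v).la = x.la := by rw [e1]
    have e2 : occ x j = x.th ⟨j.val - (m₁+m₂), by omega⟩ := by
      unfold occ; rw [dif_neg (by omega), dif_neg (by omega), dif_pos hj3]
    by_cases hi3 : i.val < m₁ + m₂ + n₁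
    · unfold sg
      rw [dif_neg hi1, dif_neg hi1, dif_pos hi3, dif_pos hi3, el, eth, e2]
      by_cases hlt : j.val < i.val
      · have hS : sS i j := Or.inr ⟨by omega, hlt, by omega, by omega⟩
        simp only [if_pos hS]
        have hmem : (⟨j.val - (m₁+m₂), by omega⟩ : Fin n₁) ∈
            Finset.Iio (⟨i.val - (m₁+m₂), by omega⟩ : Fin n₁) := by
          simp only [Finset.mem_Iio, Fin.lt_def]; omega
        have key := hsum x.th _ _ hmem v
        omega
      · have hS : ¬ sS i j := by rintro (⟨_,_,h⟩|⟨_,h,_⟩) <;> omega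
        simp only [if_neg hS]
        have hnotmem : (⟨j.val - (m₁+m₂), by omega⟩ : Fin n₁) ∉
            Finset.Iio (⟨i.val - (m₁+m₂), by omega⟩ : Fin n₁) := by
          simp only [Finset.mem_Iio, Fin.lt_def]; omega
        rw [Finset.sum_update_of_notMem hnotmem]
    · -- i in λ-region, j in θ-region
      have hS : ¬ sS i j := by rintro (⟨_,_,h⟩|⟨_,_,h⟩) <;> omega
      simp only [if_neg hS]
      unfold sg
      rw [dif_neg hi1, dif_neg hi1, dif_neg hi3, dif_neg hi3, el, ela]
  · -- j in λ-region
    have hjlt : j.val - (m₁+m₂+n₁) < n₂ := by have := j.isLt; omega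
    have e1 : stOcc x j v = { x with la := Function.update x.la ⟨j.val - (m₁+m₂+n₁), hjlt⟩ v } := by
      unfold stOcc; rw [dif_neg (by omega), dif_neg (by omega), dif_neg (by omega)]
    have el : (stOcc x j v).l = x.l := by rw [e1]
    have eth : (stOcc x j v).th = x.th := by rw [e1]
    have ela : (stOcc x j v).la = Function.update x.la ⟨j.val - (m₁+m₂+n₁), hjlt⟩ v := by rw [e1]
    have e2 : occ x j = x.la ⟨j.val - (m₁+m₂+n₁), by have := j.isLt; omega⟩ := by
      unfold occ; rw [dif_neg (by omega), dif_neg (by omega), dif_neg (by omega)]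
    by_cases hi3 : i.val < m₁ + m₂ + n₁
    · have hS : ¬ sS i j := by rintro (⟨_,_,h⟩|⟨_,_,h⟩) <;> omega
      simp only [if_neg hS]
      unfold sg
      rw [dif_neg hi1, dif_neg hi1, dif_pos hi3, dif_pos hi3, el, eth]
    · unfold sg
      rw [dif_neg hi1, dif_neg hi1, dif_neg hi3, dif_neg hi3, el, ela, e2]
      by_cases hlt : j.val < i.val
      · have hS : sS i j := Or.inr ⟨by omega, hlt, by omega, by omega⟩
        simp only [if_pos hS]
        have hmem : (⟨j.val - (m₁+m₂+n₁), by have := j.isLt; omega⟩ : Fin n₂) ∈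
            Finset.Iio (⟨i.val - (m₁+m₂+n₁), by have := i.isLt; omega⟩ : Fin n₂) := by
          simp only [Finset.mem_Iio, Fin.lt_def]; omega
        have key := hsum x.la _ _ hmem v
        omega
      · have hS : ¬ sS i j := by rintro (⟨_,h,_⟩|⟨_,h,_⟩) <;> omega
        simp only [if_neg hS]
        have hnotmem : (⟨j.val - (m₁+m₂+n₁), by have := j.isLt; omega⟩ : Fin n₂) ∉
            Finset.Iio (⟨i.val - (m₁+m₂+n₁), by have := i.isLt; omega⟩ : Fin n₂) := by
          simp only [Finset.mem_Iio, Fin.lt_def]; omega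
        rw [Finset.sum_update_of_notMem hnotmem]

lemma eps_stOcc (x : FLabel m₁ m₂ n₁ n₂) (i j : Fin (m₁+m₂+n₁+n₂)) (v : ℕ) :
    eps (stOcc x j v) i = eps x i * (sf i j) ^ (v + occ x j) := by
  have key := sg_stOcc x i j v
  unfold eps sf
  by_cases hS : sS i j
  · simp only [if_pos hS] at key ⊢
    rw [← pow_add, np (show (sg x i + (v + occ x j)) % 2 = sg (stOcc x j v) i % 2 by omega)]
  · simp only [if_neg hS] at key ⊢
    rw [one_pow, mul_one, np (show sg (stOcc x j v) i % 2 = sg x i % 2 by omega)]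

end Fock
namespace Fock

variable {m₁ m₂ n₁ n₂ p : ℕ}

lemma pv0 {u : ZMod 2} (h : u = 0) : (-1:ℝ)^(ZMod.val u) = 1 := by subst h; rfl
lemma pv1 {u : ZMod 2} (h : u = 1) : (-1:ℝ)^(ZMod.val u) = -1 := by
  subst h; rw [show ZMod.val (1 : ZMod 2) = 1 from rfl, pow_one]

lemma sgn_add (a b c : ZMod 2 × ZMod 2) : sgn (a+b) c = sgn a c * sgn b c := by
  unfold sgn
  rw [show ((a+b).1*c.1+(a+b).2*c.2 : ZMod 2) = (a.1*c.1+a.2*c.2)+(b.1*c.1+b.2*c.2) by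
    cases a; cases b; cases c; simp only [Prod.fst_add, Prod.snd_add]; ring]
  set u := (a.1*c.1+a.2*c.2 : ZMod 2)
  set v := (b.1*c.1+b.2*c.2 : ZMod 2)
  have h : ∀ w : ZMod 2, w = 0 ∨ w = 1 := by decide
  rcases h u with hu|hu <;> rcases h v with hv|hv <;> rw [hu, hv] <;>
    norm_num [show ((0+0:ZMod 2)).val = 0 from rfl, show ((0+1:ZMod 2)).val = 1 from rfl,
      show ((1+0:ZMod 2)).val = 1 from rfl, show ((1+1:ZMod 2)).val = 0 from rfl,
      show ZMod.val (0:ZMod 2) = 0 from rfl, show ZMod.val (1:ZMod 2) = 1 from rfl,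
      show ZMod.val (2:ZMod 2) = 0 from rfl]

lemma sgn_comm (a b : ZMod 2 × ZMod 2) : sgn a b = sgn b a := by
  unfold sgn; rw [mul_comm a.1, mul_comm a.2]

lemma sgn_sq (a b : ZMod 2 × ZMod 2) : sgn a b * sgn a b = 1 := by
  unfold sgn
  rw [← pow_add, np (show ((a.1*b.1+a.2*b.2 : ZMod 2).val + (a.1*b.1+a.2*b.2 : ZMod 2).val) % 2
    = 0 % 2 by omega), pow_zero]

lemma sgn_self (i : Fin (m₁+m₂+n₁+n₂)) :
    sgn (deg i) (deg i) = if m₁ + m₂ ≤ i.val then (-1:ℝ) else 1 := by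
  unfold sgn deg
  split_ifs <;>
    first
    | (exfalso; omega)
    | (rw [pv0 (by decide)])
    | (rw [pv1 (by decide)])

lemma sgn_law {i j : Fin (m₁+m₂+n₁+n₂)} (hij : i ≠ j) :
    sf i j * sf j i = sgn (deg i) (deg j) := by
  have hij' : i.val ≠ j.val := fun h => hij (Fin.ext h)
  by_cases hi : i.val < m₁ + m₂ <;> by_cases hj : j.val < m₁ + m₂
  · rw [sf_bos hi, sf_bos hj]
    unfold sgn deg
    split_ifs <;>
      first
      | omega
      | (rw [pv0 (by decide)]; norm_num)
      | (rw [pv1 (by decide)]; norm_num)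
      | (rw [pv0 (by decide)])
      | (rw [pv1 (by decide)])
  · -- i bosonic, j fermionic
    rw [sf_bos hi, one_mul]
    unfold sf
    by_cases hil : m₁ ≤ i.val
    · rw [if_pos (show sS j i from Or.inl ⟨by omega, hil, hi⟩)]
      unfold sgn deg
      split_ifs <;>
        first | omega | (exact (pv1 (by decide)).symm)
    · rw [if_neg (show ¬ sS j i from by rintro (⟨_,h,_⟩|⟨h,_,_⟩) <;> omega)]
      unfold sgn deg
      split_ifs <;>
        first | omega | (exact (pv0 (by decide)).symm)
  · -- i fermionic, j bosonic
    rw [sf_bos hj, mul_one]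
    unfold sf
    by_cases hjl : m₁ ≤ j.val
    · rw [if_pos (show sS i j from Or.inl ⟨by omega, hjl, hj⟩)]
      unfold sgn deg
      split_ifs <;>
        first | omega | (exact (pv1 (by decide)).symm)
    · rw [if_neg (show ¬ sS i j from by rintro (⟨_,h,_⟩|⟨h,_,_⟩) <;> omega)]
      unfold sgn deg
      split_ifs <;>
        first | omega | (exact (pv0 (by decide)).symm)
  · -- both fermionic
    unfold sf
    by_cases hsame : (i.val < m₁+m₂+n₁ ↔ j.val < m₁+m₂+n₁)
    · -- same subregion : exactly one of sS i j / sS j i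
      by_cases hlt : j.val < i.val
      · rw [if_pos (show sS i j from Or.inr ⟨by omega, hlt, hsame⟩),
          if_neg (show ¬ sS j i from by rintro (⟨_,h,_⟩|⟨_,h,_⟩) <;> omega)]
        unfold sgn deg
        split_ifs <;>
          first
          | omega
          | (rw [pv1 (by decide)]; norm_num)
          | (rw [pv0 (by decide)]; norm_num)
          | (exfalso; exact absurd (hsame.mp (by omega)) (by omega))
          | (exfalso; exact absurd (hsame.mpr (by omega)) (by omega))
      · rw [if_neg (show ¬ sS i j from by rintro (⟨_,h,_⟩|⟨_,h,_⟩) <;> omega),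
          if_pos (show sS j i from Or.inr ⟨by omega, by omega, hsame.symm⟩)]
        unfold sgn deg
        split_ifs <;>
          first
          | omega
          | (rw [pv1 (by decide)]; norm_num)
          | (rw [pv0 (by decide)]; norm_num)
          | (exfalso; exact absurd (hsame.mp (by omega)) (by omega))
          | (exfalso; exact absurd (hsame.mpr (by omega)) (by omega))
    · -- different subregions : both false
      rw [if_neg (show ¬ sS i j from by
          rintro (⟨_,_,h⟩|⟨_,_,h⟩) <;> first | omega | exact hsame h),
        if_neg (show ¬ sS j i from by
          rintro (⟨_,_,h⟩|⟨_,_,h⟩) <;> first | omega | exact hsame h.symm)]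
      unfold sgn deg
      split_ifs <;>
        first
        | omega
        | (rw [pv0 (by decide)]; norm_num)
        | (exfalso; exact hsame (by constructor <;> omega))

end Fock
namespace Fock

variable {m₁ m₂ n₁ n₂ p : ℕ}

noncomputable def wP (x : FLabel m₁ m₂ n₁ n₂) (i : Fin (m₁+m₂+n₁+n₂)) : ℝ :=
  if m₁+m₂ ≤ i.val then (1 - (occ x i : ℝ)) * eps x i else Real.sqrt ((occ x i : ℝ) + 1)

noncomputable def wM (x : FLabel m₁ m₂ n₁ n₂) (i : Fin (m₁+m₂+n₁+n₂)) : ℝ :=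
  if m₁+m₂ ≤ i.val then (occ x i : ℝ) * eps x i else Real.sqrt (occ x i : ℝ)

noncomputable def cP (p : ℕ) (x : FLabel m₁ m₂ n₁ n₂) (i : Fin (m₁+m₂+n₁+n₂)) : ℝ :=
  wP x i * Real.sqrt ((p - x.R : ℕ) : ℝ)

noncomputable def cM (p : ℕ) (x : FLabel m₁ m₂ n₁ n₂) (i : Fin (m₁+m₂+n₁+n₂)) : ℝ :=
  wM x i * Real.sqrt (((p - x.R : ℕ) : ℝ) + 1)

def upP (x : FLabel m₁ m₂ n₁ n₂) (i : Fin (m₁+m₂+n₁+n₂)) : FLabel m₁ m₂ n₁ n₂ :=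
  stOcc x i (occ x i + 1)

def upM (x : FLabel m₁ m₂ n₁ n₂) (i : Fin (m₁+m₂+n₁+n₂)) : FLabel m₁ m₂ n₁ n₂ :=
  stOcc x i (occ x i - 1)

lemma eps_sq (x : FLabel m₁ m₂ n₁ n₂) (i : Fin (m₁+m₂+n₁+n₂)) : eps x i * eps x i = 1 := by
  unfold eps; rw [← pow_add, np (show (sg x i + sg x i) % 2 = 0 % 2 by omega), pow_zero]

lemma R_upP (x : FLabel m₁ m₂ n₁ n₂) (i : Fin (m₁+m₂+n₁+n₂)) : (upP x i).R = x.R + 1 := by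
  have h := R_stOcc x i (occ x i + 1); unfold upP; omega

lemma R_upM {x : FLabel m₁ m₂ n₁ n₂} {i : Fin (m₁+m₂+n₁+n₂)} (h : 1 ≤ occ x i) :
    (upM x i).R + 1 = x.R := by
  have h2 := R_stOcc x i (occ x i - 1); unfold upM; omega

lemma upM_of_zero {x : FLabel m₁ m₂ n₁ n₂} {i : Fin (m₁+m₂+n₁+n₂)} (h : occ x i = 0) :
    upM x i = x := by
  unfold upM
  rw [h]
  have h2 : (0:ℕ) - 1 = occ x i := by omega
  rw [h2, stOcc_occ_self]

lemma occ_upP_self (x : FLabel m₁ m₂ n₁ n₂) (i : Fin (m₁+m₂+n₁+n₂)) :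
    occ (upP x i) i = occ x i + 1 := occ_stOcc_self x i _
lemma occ_upM_self (x : FLabel m₁ m₂ n₁ n₂) (i : Fin (m₁+m₂+n₁+n₂)) :
    occ (upM x i) i = occ x i - 1 := occ_stOcc_self x i _
lemma occ_upP_ne {i j : Fin (m₁+m₂+n₁+n₂)} (x : FLabel m₁ m₂ n₁ n₂) (hij : i ≠ j) :
    occ (upP x j) i = occ x i := occ_stOcc_ne x hij _
lemma occ_upM_ne {i j : Fin (m₁+m₂+n₁+n₂)} (x : FLabel m₁ m₂ n₁ n₂) (hij : i ≠ j) :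
    occ (upM x j) i = occ x i := occ_stOcc_ne x hij _

lemma upP_upP_comm {i j : Fin (m₁+m₂+n₁+n₂)} (x : FLabel m₁ m₂ n₁ n₂) (hij : i ≠ j) :
    upP (upP x j) i = upP (upP x i) j := by
  unfold upP
  rw [occ_stOcc_ne x hij, occ_stOcc_ne x hij.symm, stOcc_comm x hij]

lemma upM_upM_comm {i j : Fin (m₁+m₂+n₁+n₂)} (x : FLabel m₁ m₂ n₁ n₂) (hij : i ≠ j) :
    upM (upM x j) i = upM (upM x i) j := by
  unfold upM
  rw [occ_stOcc_ne x hij, occ_stOcc_ne x hij.symm, stOcc_comm x hij]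

lemma upP_upM_comm {i j : Fin (m₁+m₂+n₁+n₂)} (x : FLabel m₁ m₂ n₁ n₂) (hij : i ≠ j) :
    upP (upM x j) i = upM (upP x i) j := by
  unfold upP upM
  rw [occ_stOcc_ne x hij, occ_stOcc_ne x hij.symm, stOcc_comm x hij]

lemma upM_upP_self (x : FLabel m₁ m₂ n₁ n₂) (i : Fin (m₁+m₂+n₁+n₂)) :
    upM (upP x i) i = x := by
  unfold upM upP
  rw [occ_stOcc_self, stOcc_stOcc_self, Nat.add_sub_cancel, stOcc_occ_self]

lemma upP_upM_self {x : FLabel m₁ m₂ n₁ n₂} {i : Fin (m₁+m₂+n₁+n₂)} (h : 1 ≤ occ x i) :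
    upP (upM x i) i = x := by
  unfold upM upP
  rw [occ_stOcc_self, stOcc_stOcc_self, Nat.sub_add_cancel h, stOcc_occ_self]

lemma wP_stOcc_ne {i j : Fin (m₁+m₂+n₁+n₂)} (x : FLabel m₁ m₂ n₁ n₂) (hij : i ≠ j) :
    wP (upP x j) i = sf i j * wP x i := by
  unfold wP upP
  split_ifs with hf
  · rw [occ_stOcc_ne x hij, eps_stOcc, sf_pow_odd (by omega)]; ring
  · rw [occ_stOcc_ne x hij, sf_bos (by omega), one_mul]

lemma wM_stOcc_ne {i j : Fin (m₁+m₂+n₁+n₂)} (x : FLabel m₁ m₂ n₁ n₂) (hij : i ≠ j) :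
    wM (upP x j) i = sf i j * wM x i := by
  unfold wM upP
  split_ifs with hf
  · rw [occ_stOcc_ne x hij, eps_stOcc, sf_pow_odd (by omega)]; ring
  · rw [occ_stOcc_ne x hij, sf_bos (by omega), one_mul]

lemma wP_stOcc_ne' {i j : Fin (m₁+m₂+n₁+n₂)} (x : FLabel m₁ m₂ n₁ n₂) (hij : i ≠ j)
    (h : 1 ≤ occ x j) : wP (upM x j) i = sf i j * wP x i := by
  unfold wP upM
  split_ifs with hf
  · rw [occ_stOcc_ne x hij, eps_stOcc, sf_pow_odd (by omega)]; ring
  · rw [occ_stOcc_ne x hij, sf_bos (by omega), one_mul]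

lemma wM_stOcc_ne' {i j : Fin (m₁+m₂+n₁+n₂)} (x : FLabel m₁ m₂ n₁ n₂) (hij : i ≠ j)
    (h : 1 ≤ occ x j) : wM (upM x j) i = sf i j * wM x i := by
  unfold wM upM
  split_ifs with hf
  · rw [occ_stOcc_ne x hij, eps_stOcc, sf_pow_odd (by omega)]; ring
  · rw [occ_stOcc_ne x hij, sf_bos (by omega), one_mul]

lemma eps_stOcc_self (x : FLabel m₁ m₂ n₁ n₂) (i : Fin (m₁+m₂+n₁+n₂)) (v : ℕ) :
    eps (stOcc x i v) i = eps x i := by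
  rw [eps_stOcc, show sf i i = 1 from sf_self i, one_pow, mul_one]

lemma wP_stOcc_self (x : FLabel m₁ m₂ n₁ n₂) (i : Fin (m₁+m₂+n₁+n₂)) (v : ℕ) :
    wP (stOcc x i v) i
      = if m₁+m₂ ≤ i.val then (1 - (v:ℝ)) * eps x i else Real.sqrt ((v:ℝ)+1) := by
  unfold wP
  rw [occ_stOcc_self, eps_stOcc_self]

lemma wM_stOcc_self (x : FLabel m₁ m₂ n₁ n₂) (i : Fin (m₁+m₂+n₁+n₂)) (v : ℕ) :
    wM (stOcc x i v) i
      = if m₁+m₂ ≤ i.val then (v:ℝ) * eps x i else Real.sqrt (v:ℝ) := by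
  unfold wM
  rw [occ_stOcc_self, eps_stOcc_self]

lemma wM_zero {x : FLabel m₁ m₂ n₁ n₂} {i : Fin (m₁+m₂+n₁+n₂)} (h : occ x i = 0) :
    wM x i = 0 := by
  unfold wM; rw [h]; split_ifs <;> simp

lemma wP_one {x : FLabel m₁ m₂ n₁ n₂} {i : Fin (m₁+m₂+n₁+n₂)} (hf : m₁+m₂ ≤ i.val)
    (h : occ x i = 1) : wP x i = 0 := by
  unfold wP; rw [if_pos hf, h]; norm_num

lemma valid_upM {x : FLabel m₁ m₂ n₁ n₂} (hx : x.Valid p) (i : Fin (m₁+m₂+n₁+n₂)) :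
    (upM x i).Valid p := by
  apply valid_stOcc hx
  · intro hf; have := occ_le_one (p := p) hx hf; omega
  · have := hx.2.2; omega

lemma valid_upP {x : FLabel m₁ m₂ n₁ n₂} {i : Fin (m₁+m₂+n₁+n₂)} (hx : x.Valid p)
    (hR : x.R < p) (hocc : m₁+m₂ ≤ i.val → occ x i = 0) : (upP x i).Valid p := by
  apply valid_stOcc hx
  · intro hf; have := hocc hf; omega
  · omega

lemma cP_ne {x : FLabel m₁ m₂ n₁ n₂} {i : Fin (m₁+m₂+n₁+n₂)} (hx : x.Valid p)
    (h : cP p x i ≠ 0) : (upP x i).Valid p := by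
  unfold cP at h
  rcases mul_ne_zero_iff.mp h with ⟨hw, hq⟩
  apply valid_upP hx
  · have : ((p - x.R : ℕ) : ℝ) ≠ 0 := fun h0 => hq (by rw [h0, Real.sqrt_zero])
    have : (p - x.R : ℕ) ≠ 0 := fun h0 => this (by rw [h0]; norm_num)
    omega
  · intro hf
    have hle := occ_le_one (p := p) hx hf
    unfold wP at hw
    rw [if_pos hf] at hw
    rcases mul_ne_zero_iff.mp hw with ⟨hw1, _⟩
    by_contra h0
    exact hw1 (by have : occ x i = 1 := by omega
                  rw [this]; norm_num)

end Fock
namespace Fock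

variable {m₁ m₂ n₁ n₂ p : ℕ}

lemma bvec_eq_zero {c : ℝ} (h : c = 0) (y : FLabel m₁ m₂ n₁ n₂) : bvec p y c = 0 := by
  unfold bvec; split_ifs <;> simp [h]

lemma bvec_smul (s c : ℝ) (y : FLabel m₁ m₂ n₁ n₂) :
    s • bvec p y c = bvec p y (s * c) := by
  unfold bvec; split_ifs <;> simp [smul_smul]

lemma bvec_congr {y y' : FLabel m₁ m₂ n₁ n₂} {c c' : ℝ} (hy : y = y') (hc : c = c') :
    bvec p y c = bvec p y' c' := by rw [hy, hc]

lemma bvec_sub (y : FLabel m₁ m₂ n₁ n₂) (a b : ℝ) :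
    bvec p y a - bvec p y b = bvec p y (a - b) := by
  unfold bvec; split_ifs <;> simp [sub_smul]

lemma bvec_add (y : FLabel m₁ m₂ n₁ n₂) (a b : ℝ) :
    bvec p y a + bvec p y b = bvec p y (a + b) := by
  unfold bvec; split_ifs <;> simp [add_smul]

lemma extOp_single (g : FIdx m₁ m₂ n₁ n₂ p → W m₁ m₂ n₁ n₂ p) (z : FIdx m₁ m₂ n₁ n₂ p) :
    extOp g (Finsupp.single z 1) = g z := by
  unfold extOp
  rw [Finsupp.lsum_single, LinearMap.toSpanSingleton_apply, one_smul]

lemma op_ext {A B : W m₁ m₂ n₁ n₂ p →ₗ[ℝ] W m₁ m₂ n₁ n₂ p}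
    (h : ∀ z : FIdx m₁ m₂ n₁ n₂ p, A (Finsupp.single z 1) = B (Finsupp.single z 1)) :
    A = B := by
  apply Finsupp.lhom_ext
  intro a b
  have hb : Finsupp.single a b = b • Finsupp.single a (1:ℝ) := by
    rw [Finsupp.smul_single, smul_eq_mul, mul_one]
  rw [hb, map_smul, map_smul, h a]

def IsShift (O : W m₁ m₂ n₁ n₂ p →ₗ[ℝ] W m₁ m₂ n₁ n₂ p)
    (T : FLabel m₁ m₂ n₁ n₂ → FLabel m₁ m₂ n₁ n₂) (c : FLabel m₁ m₂ n₁ n₂ → ℝ) : Prop :=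
  ∀ z : FIdx m₁ m₂ n₁ n₂ p, O (Finsupp.single z (1:ℝ)) = bvec p (T z.1) (c z.1)

lemma shift_bvec {O : W m₁ m₂ n₁ n₂ p →ₗ[ℝ] W m₁ m₂ n₁ n₂ p}
    {T : FLabel m₁ m₂ n₁ n₂ → FLabel m₁ m₂ n₁ n₂} {c : FLabel m₁ m₂ n₁ n₂ → ℝ}
    (hO : IsShift O T c) {y : FLabel m₁ m₂ n₁ n₂} {d : ℝ} (hy : d ≠ 0 → y.Valid p) :
    O (bvec p y d) = bvec p (T y) (d * c y) := by
  by_cases hd : d = 0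
  · rw [bvec_eq_zero hd, map_zero, bvec_eq_zero (by rw [hd, zero_mul])]
  · have hv := hy hd
    have hb : bvec p y d = d • Finsupp.single ⟨y, hv⟩ (1:ℝ) := by
      unfold bvec; rw [dif_pos hv]
    rw [hb, map_smul, hO ⟨y, hv⟩, bvec_smul]

lemma aP_shift (i : Fin (m₁+m₂+n₁+n₂)) :
    IsShift (aP (p := p) i) (fun x => upP x i) (fun x => cP p x i) := by
  intro z
  by_cases h1 : i.val < m₁
  · unfold aP
    rw [dif_pos h1]
    unfold bP
    rw [extOp_single]
    apply bvec_congr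
    · simp only [upP, occ, stOcc, dif_pos h1, dif_pos h1]
    · simp only [cP, wP, occ, if_neg (show ¬ m₁ + m₂ ≤ i.val by omega), dif_pos h1]
      push_cast
      rw [Real.sqrt_mul (by positivity)]
  · by_cases h2 : i.val < m₁ + m₂
    · unfold aP
      rw [dif_neg h1, dif_pos h2]
      unfold btP
      rw [extOp_single]
      apply bvec_congr
      · simp only [upP, occ, stOcc, dif_neg h1, dif_pos h2, dif_neg h1, dif_pos h2]
      · simp only [cP, wP, occ, if_neg (show ¬ m₁ + m₂ ≤ i.val by omega), dif_neg h1, dif_pos h2]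
        push_cast
        rw [Real.sqrt_mul (by positivity)]
    · by_cases h3 : i.val < m₁ + m₂ + n₁
      · unfold aP
        rw [dif_neg h1, dif_neg h2, dif_pos h3]
        unfold fP
        rw [extOp_single]
        apply bvec_congr
        · simp only [upP, occ, stOcc, dif_neg h1, dif_neg h2, dif_pos h3, dif_neg h1, dif_neg h2, dif_pos h3]
        · simp only [cP, wP, occ, if_pos (show m₁ + m₂ ≤ i.val by omega), dif_neg h1, dif_neg h2, dif_pos h3]
          have he : eps z.1 i = sgnl z.1 * sgnth z.1 ⟨i.val - (m₁+m₂), by omega⟩ := by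
            unfold eps sg sgnl sgnth
            rw [dif_neg (by omega : ¬ i.val < m₁ + m₂), dif_pos h3, pow_add]
          rw [he]
          ring
      · unfold aP
        rw [dif_neg h1, dif_neg h2, dif_neg h3]
        unfold ftP
        rw [extOp_single]
        apply bvec_congr
        · simp only [upP, occ, stOcc, dif_neg h1, dif_neg h2, dif_neg h3, dif_neg h1, dif_neg h2, dif_neg h3]
        · simp only [cP, wP, occ, if_pos (show m₁ + m₂ ≤ i.val by omega), dif_neg h1, dif_neg h2, dif_neg h3]
          have he : eps z.1 i
              = sgnl z.1 * sgnla z.1 ⟨i.val - (m₁+m₂+n₁), (by have := i.isLt; omega)⟩ := by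
            unfold eps sg sgnl sgnla
            rw [dif_neg (by omega : ¬ i.val < m₁ + m₂), dif_neg h3, pow_add]
          rw [he]
          ring

lemma aM_shift (i : Fin (m₁+m₂+n₁+n₂)) :
    IsShift (aM (p := p) i) (fun x => upM x i) (fun x => cM p x i) := by
  intro z
  by_cases h1 : i.val < m₁
  · unfold aM
    rw [dif_pos h1]
    unfold bM
    rw [extOp_single]
    apply bvec_congr
    · simp only [upM, occ, stOcc, dif_pos h1, dif_pos h1]
    · simp only [cM, wM, occ, if_neg (show ¬ m₁ + m₂ ≤ i.val by omega), dif_pos h1]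
      push_cast
      rw [Real.sqrt_mul (by positivity)]
  · by_cases h2 : i.val < m₁ + m₂
    · unfold aM
      rw [dif_neg h1, dif_pos h2]
      unfold btM
      rw [extOp_single]
      apply bvec_congr
      · simp only [upM, occ, stOcc, dif_neg h1, dif_pos h2, dif_neg h1, dif_pos h2]
      · simp only [cM, wM, occ, if_neg (show ¬ m₁ + m₂ ≤ i.val by omega), dif_neg h1, dif_pos h2]
        push_cast
        rw [Real.sqrt_mul (by positivity)]
    · by_cases h3 : i.val < m₁ + m₂ + n₁
      · unfold aM
        rw [dif_neg h1, dif_neg h2, dif_pos h3]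
        unfold fM
        rw [extOp_single]
        apply bvec_congr
        · simp only [upM, occ, stOcc, dif_neg h1, dif_neg h2, dif_pos h3, dif_neg h1, dif_neg h2, dif_pos h3]
        · simp only [cM, wM, occ, if_pos (show m₁ + m₂ ≤ i.val by omega), dif_neg h1, dif_neg h2, dif_pos h3]
          have he : eps z.1 i = sgnl z.1 * sgnth z.1 ⟨i.val - (m₁+m₂), by omega⟩ := by
            unfold eps sg sgnl sgnth
            rw [dif_neg (by omega : ¬ i.val < m₁ + m₂), dif_pos h3, pow_add]
          rw [he]
          push_cast
          ring
      · unfold aM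
        rw [dif_neg h1, dif_neg h2, dif_neg h3]
        unfold ftM
        rw [extOp_single]
        apply bvec_congr
        · simp only [upM, occ, stOcc, dif_neg h1, dif_neg h2, dif_neg h3, dif_neg h1, dif_neg h2, dif_neg h3]
        · simp only [cM, wM, occ, if_pos (show m₁ + m₂ ≤ i.val by omega), dif_neg h1, dif_neg h2, dif_neg h3]
          have he : eps z.1 i
              = sgnl z.1 * sgnla z.1 ⟨i.val - (m₁+m₂+n₁), (by have := i.isLt; omega)⟩ := by
            unfold eps sg sgnl sgnla
            rw [dif_neg (by omega : ¬ i.val < m₁ + m₂), dif_neg h3, pow_add]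
          rw [he]
          push_cast
          ring

lemma okM {y : FLabel m₁ m₂ n₁ n₂} {d : ℝ} (j : Fin (m₁+m₂+n₁+n₂))
    (hy : d ≠ 0 → y.Valid p) : d * cM p y j ≠ 0 → (upM y j).Valid p :=
  fun h => valid_upM (hy fun h0 => h (by rw [h0, zero_mul])) j

lemma okP {y : FLabel m₁ m₂ n₁ n₂} {d : ℝ} (i : Fin (m₁+m₂+n₁+n₂))
    (hy : d ≠ 0 → y.Valid p) : d * cP p y i ≠ 0 → (upP y i).Valid p := by
  intro h
  rcases mul_ne_zero_iff.mp h with ⟨hd, hc⟩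
  exact cP_ne (hy hd) hc

end Fock
namespace Fock

variable {m₁ m₂ n₁ n₂ p : ℕ}

lemma bvec_neg (y : FLabel m₁ m₂ n₁ n₂) (c : ℝ) : -bvec p y c = bvec p y (-c) := by
  unfold bvec; split_ifs <;> simp

lemma sf_cases (i j : Fin (m₁+m₂+n₁+n₂)) : sf i j = 1 ∨ sf i j = -1 := by
  unfold sf; split_ifs <;> [right; left] <;> rfl

lemma sgn_sf {i j : Fin (m₁+m₂+n₁+n₂)} (hij : i ≠ j) :
    sgn (deg i) (deg j) * sf j i = sf i j := by
  rw [← sgn_law hij]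
  linear_combination (sf i j) * (sf_sq j i)

lemma eQ0 {x : FLabel m₁ m₂ n₁ n₂} (h : x.R = p) : ((p - x.R : ℕ) : ℝ) = 0 := by
  rw [show (p - x.R : ℕ) = 0 by omega]; norm_num

lemma sq_upM {x : FLabel m₁ m₂ n₁ n₂} {j : Fin (m₁+m₂+n₁+n₂)} (h1 : 1 ≤ occ x j)
    (h2 : x.R ≤ p) :
    Real.sqrt ((p - (upM x j).R : ℕ) : ℝ) = Real.sqrt (((p - x.R : ℕ) : ℝ) + 1) := by
  congr 1
  have h3 := R_upM h1
  have h4 := occ_le_R x j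
  rw [show (p - (upM x j).R : ℕ) = (p - x.R) + 1 by omega]
  push_cast; ring

lemma sq_upP {x : FLabel m₁ m₂ n₁ n₂} {i : Fin (m₁+m₂+n₁+n₂)} (h : x.R < p) :
    Real.sqrt (((p - (upP x i).R : ℕ) : ℝ) + 1) = Real.sqrt ((p - x.R : ℕ) : ℝ) := by
  congr 1
  have h3 := R_upP x i
  rw [show (p - x.R : ℕ) = (p - (upP x i).R) + 1 by omega]
  push_cast; ring

lemma sq_upP0 {x : FLabel m₁ m₂ n₁ n₂} {i : Fin (m₁+m₂+n₁+n₂)} (h : x.R = p) :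
    Real.sqrt (((p - (upP x i).R : ℕ) : ℝ) + 1) = 1 := by
  have h3 := R_upP x i
  rw [show (p - (upP x i).R : ℕ) = 0 by omega]
  norm_num

def Tij (i j : Fin (m₁+m₂+n₁+n₂)) (x : FLabel m₁ m₂ n₁ n₂) : FLabel m₁ m₂ n₁ n₂ :=
  if i = j then x else upP (upM x j) i

noncomputable def Cd (p : ℕ) (x : FLabel m₁ m₂ n₁ n₂) (i : Fin (m₁+m₂+n₁+n₂)) : ℝ :=
  (occ x i : ℝ) + (if m₁+m₂ ≤ i.val then 1 else -1) * ((p - x.R : ℕ) : ℝ)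

noncomputable def Cij (p : ℕ) (i j : Fin (m₁+m₂+n₁+n₂)) (x : FLabel m₁ m₂ n₁ n₂) : ℝ :=
  if i = j then Cd p x i else sf i j * wP x i * wM x j

lemma inner_shift (i j : Fin (m₁+m₂+n₁+n₂)) :
    IsShift (bb (deg i) (deg j) (aP (p := p) i) (aM j)) (Tij i j) (Cij p i j) := by
  rintro ⟨x, hx⟩
  have hxle : x.R ≤ p := hx.2.2
  unfold bb
  rw [LinearMap.sub_apply, LinearMap.smul_apply, LinearMap.comp_apply, LinearMap.comp_apply,
    aM_shift j ⟨x,hx⟩, aP_shift i ⟨x,hx⟩,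
    shift_bvec (aP_shift i) (fun _ => valid_upM hx j),
    shift_bvec (aM_shift j) (fun h => cP_ne hx h),
    bvec_smul]
  by_cases hij : i = j
  · subst hij
    rw [upM_upP_self]
    simp only [Tij, Cij, if_pos rfl]
    by_cases h0 : occ x i = 0
    · rw [bvec_eq_zero (show cM p x i * cP p (upM x i) i = 0 by
        unfold cM; rw [wM_zero h0]; ring), zero_sub, bvec_neg]
      apply bvec_congr rfl
      unfold cP cM Cd
      rw [show wM (upP x i) i
            = if m₁+m₂ ≤ i.val then ((occ x i + 1 : ℕ):ℝ) * eps x i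
              else Real.sqrt ((occ x i + 1 : ℕ):ℝ) from wM_stOcc_self x i _,
        sgn_self, h0]
      by_cases hR : x.R = p
      · rw [eQ0 hR, sq_upP0 hR, Real.sqrt_zero]
        unfold wP
        split_ifs <;> norm_num
      · have hR' : x.R < p := lt_of_le_of_ne hxle hR
        rw [sq_upP hR']
        unfold wP
        rw [h0]
        have h2 : Real.sqrt ((p - x.R : ℕ) : ℝ) * Real.sqrt ((p - x.R : ℕ) : ℝ)
            = ((p - x.R : ℕ) : ℝ) := Real.mul_self_sqrt (by positivity)
        have h3 := eps_sq x i
        push_cast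
        rw [show ((0:ℝ)+1) = 1 by norm_num, Real.sqrt_one]
        split_ifs with hf
        · linear_combination (eps x i * eps x i) * h2 + ((p - x.R : ℕ) : ℝ) * h3
        · linear_combination - h2
    · have h1 : 1 ≤ occ x i := by omega
      rw [upP_upM_self h1, bvec_sub]
      apply bvec_congr rfl
      unfold cP cM Cd
      rw [show wM (upP x i) i
            = if m₁+m₂ ≤ i.val then ((occ x i + 1 : ℕ):ℝ) * eps x i
              else Real.sqrt ((occ x i + 1 : ℕ):ℝ) from wM_stOcc_self x i _,
        show wP (upM x i) i
            = if m₁+m₂ ≤ i.val then (1 - ((occ x i - 1 : ℕ):ℝ)) * eps x i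
              else Real.sqrt (((occ x i - 1 : ℕ):ℝ)+1) from wP_stOcc_self x i _,
        sgn_self, sq_upM h1 hxle]
      have hc : ((occ x i - 1 : ℕ) : ℝ) = (occ x i : ℝ) - 1 := by
        rw [Nat.cast_sub h1]; norm_num
      rw [hc, show (occ x i:ℝ)-1+1 = (occ x i:ℝ) by ring]
      push_cast
      have h3 := eps_sq x i
      have h4 : Real.sqrt (occ x i : ℝ) * Real.sqrt (occ x i : ℝ) = (occ x i : ℝ) :=
        Real.mul_self_sqrt (by positivity)
      have h5 : Real.sqrt ((occ x i : ℝ)+1) * Real.sqrt ((occ x i : ℝ)+1)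
          = (occ x i : ℝ)+1 := Real.mul_self_sqrt (by positivity)
      by_cases hR : x.R = p
      · rw [eQ0 hR, show ((0:ℝ)+1) = 1 by norm_num, Real.sqrt_one, Real.sqrt_zero]
        unfold wM wP
        split_ifs with hf
        · have hocc : occ x i = 1 := le_antisymm (occ_le_one hx hf) h1
          rw [hocc]
          linear_combination h3
        · linear_combination h4
      · have hR' : x.R < p := lt_of_le_of_ne hxle hR
        rw [sq_upP hR']
        unfold wM wP
        have h2 : Real.sqrt (((p - x.R : ℕ) : ℝ)+1) * Real.sqrt (((p - x.R : ℕ) : ℝ)+1)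
            = ((p - x.R : ℕ) : ℝ)+1 := Real.mul_self_sqrt (by positivity)
        have hq2 : Real.sqrt ((p - x.R : ℕ) : ℝ) * Real.sqrt ((p - x.R : ℕ) : ℝ)
            = ((p - x.R : ℕ) : ℝ) := Real.mul_self_sqrt (by positivity)
        split_ifs with hf
        · have hocc : occ x i = 1 := le_antisymm (occ_le_one hx hf) h1
          rw [hocc]
          linear_combination (eps x i * eps x i) * h2 + (((p - x.R : ℕ) : ℝ)+1) * h3
        · linear_combination (Real.sqrt (((p - x.R : ℕ) : ℝ)+1)
              * Real.sqrt (((p - x.R : ℕ) : ℝ)+1)) * h4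
            + (occ x i : ℝ) * h2
            - (Real.sqrt ((p - x.R : ℕ) : ℝ) * Real.sqrt ((p - x.R : ℕ) : ℝ)) * h5
            - ((occ x i : ℝ)+1) * hq2
  · -- i ≠ j
    rw [← upP_upM_comm x hij, bvec_sub]
    simp only [Tij, Cij, if_neg hij]
    apply bvec_congr rfl
    by_cases h0 : occ x j = 0
    · have e1 : cM p x j = 0 := by unfold cM; rw [wM_zero h0]; ring
      have e2 : cM p (upP x i) j = 0 := by
        unfold cM; rw [wM_stOcc_ne x (Ne.symm hij), wM_zero h0]; ring
      rw [e1, e2, wM_zero h0]; ring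
    · have h1 : 1 ≤ occ x j := by omega
      unfold cP cM
      rw [wM_stOcc_ne x (Ne.symm hij), wP_stOcc_ne' x hij h1, sq_upM h1 hxle]
      by_cases hR : x.R = p
      · rw [eQ0 hR, Real.sqrt_zero]
        norm_num [Real.sqrt_one]
        ring
      · have hR' : x.R < p := lt_of_le_of_ne hxle hR
        rw [sq_upP hR']
        have h2 : Real.sqrt (((p - x.R : ℕ) : ℝ)+1) * Real.sqrt (((p - x.R : ℕ) : ℝ)+1)
            = ((p - x.R : ℕ) : ℝ)+1 := Real.mul_self_sqrt (by positivity)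
        have h3 : Real.sqrt ((p - x.R : ℕ) : ℝ) * Real.sqrt ((p - x.R : ℕ) : ℝ)
            = ((p - x.R : ℕ) : ℝ) := Real.mul_self_sqrt (by positivity)
        have heq := sgn_sf hij
        linear_combination (sf i j * wP x i * wM x j) * h2
          - (sgn (deg i) (deg j) * sf j i * wP x i * wM x j) * h3
          - (wP x i * wM x j * ((p - x.R : ℕ) : ℝ)) * heq

end Fock
namespace Fock

variable {m₁ m₂ n₁ n₂ p : ℕ}

lemma wM_ne {x : FLabel m₁ m₂ n₁ n₂} {j : Fin (m₁+m₂+n₁+n₂)} (h : wM x j ≠ 0) :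
    1 ≤ occ x j := by
  by_contra h0
  exact h (wM_zero (by omega))

lemma wP_ne0 {x : FLabel m₁ m₂ n₁ n₂} {i : Fin (m₁+m₂+n₁+n₂)} (hf : m₁+m₂ ≤ i.val)
    (hle : occ x i ≤ 1) (h : wP x i ≠ 0) : occ x i = 0 := by
  by_contra h0
  exact h (wP_one hf (by omega))

lemma Cij_ne {x : FLabel m₁ m₂ n₁ n₂} {i j : Fin (m₁+m₂+n₁+n₂)} (hx : x.Valid p)
    (h : Cij p i j x ≠ 0) : (Tij i j x).Valid p := by
  unfold Cij Tij at *
  by_cases hij : i = j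
  · rw [if_pos hij]; exact hx
  · rw [if_neg hij] at h ⊢
    rcases mul_ne_zero_iff.mp h with ⟨h1, hM⟩
    rcases mul_ne_zero_iff.mp h1 with ⟨_, hPP⟩
    have hocc : 1 ≤ occ x j := wM_ne hM
    have hR := hx.2.2
    have hRlow := occ_le_R x j
    apply valid_upP (valid_upM hx j)
    · have := R_upM hocc; omega
    · intro hf
      rw [occ_upM_ne x hij]
      exact wP_ne0 hf (occ_le_one hx hf) hPP

lemma eq_upP {x : FLabel m₁ m₂ n₁ n₂} (i : Fin (m₁+m₂+n₁+n₂)) (h : x.R < p) :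
    ((p - (upP x i).R : ℕ) : ℝ) = ((p - x.R : ℕ) : ℝ) - 1 := by
  have h3 := R_upP x i
  rw [show (p - x.R : ℕ) = (p - (upP x i).R) + 1 by omega]
  push_cast; ring

lemma eq_upM {x : FLabel m₁ m₂ n₁ n₂} {j : Fin (m₁+m₂+n₁+n₂)} (h1 : 1 ≤ occ x j)
    (h2 : x.R ≤ p) : ((p - (upM x j).R : ℕ) : ℝ) = ((p - x.R : ℕ) : ℝ) + 1 := by
  have h3 := R_upM h1
  have h4 := occ_le_R x j
  rw [show (p - (upM x j).R : ℕ) = (p - x.R) + 1 by omega]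
  push_cast; ring

lemma Tij_R {x : FLabel m₁ m₂ n₁ n₂} {i j : Fin (m₁+m₂+n₁+n₂)} (hij : i ≠ j)
    (h1 : 1 ≤ occ x j) : (Tij i j x).R = x.R := by
  unfold Tij
  rw [if_neg hij, R_upP]
  have := R_upM h1
  omega

lemma deg_add_self (i : Fin (m₁+m₂+n₁+n₂)) :
    deg i + deg i = ((0 : ZMod 2), (0 : ZMod 2)) := by
  have h : ∀ u : ZMod 2, u + u = 0 := by decide
  rw [Prod.ext_iff]
  exact ⟨h _, h _⟩

lemma sgn_zero (b : ZMod 2 × ZMod 2) : sgn ((0 : ZMod 2), (0 : ZMod 2)) b = 1 := by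
  unfold sgn
  rw [pv0 (by simp)]

lemma rel1P (i j : Fin (m₁+m₂+n₁+n₂)) :
    bb (deg i) (deg j) (aP (p := p) i) (aP j) = 0 := by
  apply op_ext
  rintro ⟨x, hx⟩
  unfold bb
  rw [LinearMap.sub_apply, LinearMap.smul_apply, LinearMap.comp_apply, LinearMap.comp_apply,
    aP_shift j ⟨x,hx⟩, aP_shift i ⟨x,hx⟩,
    shift_bvec (aP_shift i) (fun h => cP_ne hx h),
    shift_bvec (aP_shift j) (fun h => cP_ne hx h),
    bvec_smul, LinearMap.zero_apply]
  try dsimp only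
  by_cases hij : i = j
  · subst hij
    rw [bvec_sub, sgn_self]
    apply bvec_eq_zero _
    by_cases hf : m₁+m₂ ≤ i.val
    · rw [if_pos hf]
      have h01 := occ_le_one hx hf
      have e1 : cP p x i * cP p (upP x i) i = 0 := by
        unfold cP
        rw [show wP (upP x i) i
              = if m₁+m₂ ≤ i.val then (1 - ((occ x i + 1 : ℕ):ℝ)) * eps x i
                else Real.sqrt (((occ x i + 1 : ℕ):ℝ)+1) from wP_stOcc_self x i _]
        unfold wP
        rw [if_pos hf, if_pos hf]
        rcases (show occ x i = 0 ∨ occ x i = 1 by omega) with h | h <;> rw [h] <;>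
          push_cast <;> ring
      rw [e1]; ring
    · rw [if_neg hf]; ring
  · rw [upP_upP_comm x hij, bvec_sub]
    apply bvec_eq_zero _
    unfold cP
    rw [wP_stOcc_ne x hij, wP_stOcc_ne x (Ne.symm hij),
      show (p - (upP x j).R : ℕ) = (p - (upP x i).R : ℕ) by rw [R_upP, R_upP],
      ← sgn_law hij]
    linear_combination (- (wP x i * wP x j * Real.sqrt ((p - x.R : ℕ) : ℝ)
      * Real.sqrt ((p - (upP x i).R : ℕ) : ℝ) * sf i j)) * sf_sq j i

lemma rel1M (i j : Fin (m₁+m₂+n₁+n₂)) :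
    bb (deg i) (deg j) (aM (p := p) i) (aM j) = 0 := by
  apply op_ext
  rintro ⟨x, hx⟩
  unfold bb
  rw [LinearMap.sub_apply, LinearMap.smul_apply, LinearMap.comp_apply, LinearMap.comp_apply,
    aM_shift j ⟨x,hx⟩, aM_shift i ⟨x,hx⟩,
    shift_bvec (aM_shift i) (fun _ => valid_upM hx j),
    shift_bvec (aM_shift j) (fun _ => valid_upM hx i),
    bvec_smul, LinearMap.zero_apply]
  try dsimp only
  by_cases hij : i = j
  · subst hij
    rw [bvec_sub, sgn_self]
    apply bvec_eq_zero _
    by_cases hf : m₁+m₂ ≤ i.val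
    · rw [if_pos hf]
      have h01 := occ_le_one hx hf
      have e1 : cM p x i * cM p (upM x i) i = 0 := by
        unfold cM
        rw [show wM (upM x i) i
              = if m₁+m₂ ≤ i.val then ((occ x i - 1 : ℕ):ℝ) * eps x i
                else Real.sqrt ((occ x i - 1 : ℕ):ℝ) from wM_stOcc_self x i _]
        unfold wM
        rw [if_pos hf, if_pos hf]
        rcases (show occ x i = 0 ∨ occ x i = 1 by omega) with h | h <;> rw [h] <;>
          push_cast <;> ring
      rw [e1]; ring
    · rw [if_neg hf]; ring
  · rw [upM_upM_comm x hij, bvec_sub]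
    apply bvec_eq_zero _
    by_cases h0i : occ x i = 0
    · have e1 : cM p x i = 0 := by unfold cM; rw [wM_zero h0i]; ring
      have e2 : cM p (upM x j) i = 0 := by
        unfold cM
        rw [wM_zero (show occ (upM x j) i = 0 by rw [occ_upM_ne x hij]; exact h0i)]
        ring
      rw [e1, e2]; ring
    · by_cases h0j : occ x j = 0
      · have e1 : cM p x j = 0 := by unfold cM; rw [wM_zero h0j]; ring
        have e2 : cM p (upM x i) j = 0 := by
          unfold cM
          rw [wM_zero (show occ (upM x i) j = 0 by
            rw [occ_upM_ne x (Ne.symm hij)]; exact h0j)]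
          ring
        rw [e1, e2]; ring
      · have h1i : 1 ≤ occ x i := by omega
        have h1j : 1 ≤ occ x j := by omega
        unfold cM
        rw [wM_stOcc_ne' x hij h1j, wM_stOcc_ne' x (Ne.symm hij) h1i,
          show (p - (upM x j).R : ℕ) = (p - (upM x i).R : ℕ) by
            have := R_upM h1i; have := R_upM h1j; omega,
          ← sgn_law hij]
        linear_combination (- (wM x i * wM x j * Real.sqrt (((p - x.R : ℕ) : ℝ) + 1)
          * Real.sqrt (((p - (upM x i).R : ℕ) : ℝ) + 1) * sf i j)) * sf_sq j i

end Fock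
namespace Fock

variable {m₁ m₂ n₁ n₂ p : ℕ}

lemma msq {a : ℝ} (h : 0 ≤ a) : Real.sqrt a * Real.sqrt a = a := Real.mul_self_sqrt h

lemma rel2 (i j k : Fin (m₁+m₂+n₁+n₂)) :
    bb (deg i + deg j) (deg k) (bb (deg i) (deg j) (aP (p := p) i) (aM j)) (aP k)
      = (if j = k then (1 : ℝ) else 0) • aP i +
          sgn (deg i) (deg i) • ((if i = j then (1 : ℝ) else 0) • aP k) := by
  apply op_ext
  rintro ⟨x, hx⟩
  have hxle : x.R ≤ p := hx.2.2
  rw [show bb (deg i + deg j) (deg k) (bb (deg i) (deg j) (aP (p := p) i) (aM j)) (aP k)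
      = (bb (deg i) (deg j) (aP i) (aM j)) ∘ₗ (aP k)
        - sgn (deg i + deg j) (deg k) • ((aP k) ∘ₗ (bb (deg i) (deg j) (aP i) (aM j)))
      from rfl]
  rw [LinearMap.sub_apply, LinearMap.smul_apply, LinearMap.comp_apply, LinearMap.comp_apply,
    aP_shift k ⟨x,hx⟩, inner_shift i j ⟨x,hx⟩,
    shift_bvec (inner_shift i j) (fun h => cP_ne hx h),
    shift_bvec (aP_shift k) (fun h => Cij_ne hx h),
    bvec_smul,
    LinearMap.add_apply, LinearMap.smul_apply, LinearMap.smul_apply, LinearMap.smul_apply,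
    aP_shift i ⟨x,hx⟩, aP_shift k ⟨x,hx⟩, bvec_smul, bvec_smul, bvec_smul]
  try dsimp only
  by_cases hij : i = j
  · subst hij
    simp only [Tij, Cij, eq_self_iff_true, if_true]
    rw [deg_add_self i, sgn_zero, one_mul]
    by_cases hik : i = k
    · subst hik
      rw [if_pos rfl, sgn_self, bvec_sub, bvec_add]
      apply bvec_congr rfl
      by_cases hR : x.R = p
      · have e0 : cP p x i = 0 := by unfold cP; rw [eQ0 hR, Real.sqrt_zero]; ring
        rw [e0]; ring
      · have hR' := lt_of_le_of_ne hxle hR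
        unfold Cd
        rw [eq_upP i hR', occ_upP_self]
        push_cast
        split_ifs <;> ring
    · rw [if_neg hik, sgn_self, bvec_sub,
        bvec_eq_zero (zero_mul (cP p x i)), zero_add]
      apply bvec_congr rfl
      by_cases hR : x.R = p
      · have e0 : cP p x k = 0 := by unfold cP; rw [eQ0 hR, Real.sqrt_zero]; ring
        rw [e0]; ring
      · have hR' := lt_of_le_of_ne hxle hR
        unfold Cd
        rw [eq_upP k hR', occ_upP_ne x hik]
        push_cast
        split_ifs <;> ring
  · simp only [Tij, Cij, if_neg hij]
    rw [bvec_eq_zero (show sgn (deg i) (deg i) * ((0:ℝ) * cP p x k) = 0 by ring), add_zero]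
    by_cases hjk : j = k
    · subst hjk
      rw [if_pos rfl, upM_upP_self]
      by_cases h0 : occ x j = 0
      · rw [bvec_eq_zero (show sgn (deg i + deg j) (deg j) *
            (sf i j * wP x i * wM x j * cP p (upP (upM x j) i) j) = 0 by
              rw [wM_zero h0]; ring), sub_zero]
        apply bvec_congr rfl
        rw [wP_stOcc_ne x hij,
          show wM (upP x j) j
            = if m₁+m₂ ≤ j.val then ((occ x j + 1 : ℕ):ℝ) * eps x j
              else Real.sqrt ((occ x j + 1 : ℕ):ℝ) from wM_stOcc_self x j _]
        unfold cP wP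
        rw [h0]
        push_cast
        split_ifs with hfj hfi hfi
        · linear_combination (sf i j * sf i j * ((1 - (occ x i : ℝ)) * eps x i)
              * Real.sqrt ((p - x.R : ℕ) : ℝ)) * eps_sq x j
            + (((1 - (occ x i : ℝ)) * eps x i) * Real.sqrt ((p - x.R : ℕ) : ℝ)) * sf_sq i j
        · linear_combination (sf i j * sf i j * Real.sqrt ((occ x i : ℝ) + 1)
              * Real.sqrt ((p - x.R : ℕ) : ℝ)) * eps_sq x j
            + ((Real.sqrt ((occ x i : ℝ) + 1)) * Real.sqrt ((p - x.R : ℕ) : ℝ)) * sf_sq i j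
        · rw [show (0:ℝ)+1 = 1 by norm_num, Real.sqrt_one]
          linear_combination (((1 - (occ x i : ℝ)) * eps x i)
            * Real.sqrt ((p - x.R : ℕ) : ℝ)) * sf_sq i j
        · rw [show (0:ℝ)+1 = 1 by norm_num, Real.sqrt_one]
          linear_combination ((Real.sqrt ((occ x i : ℝ) + 1))
            * Real.sqrt ((p - x.R : ℕ) : ℝ)) * sf_sq i j
      · have h1 : 1 ≤ occ x j := by omega
        rw [show upP (upP (upM x j) i) j = upP x i by
          rw [← upP_upP_comm (upM x j) hij, upP_upM_self h1],
          bvec_sub]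
        apply bvec_congr rfl
        have hc : ((occ x j - 1 : ℕ) : ℝ) = (occ x j : ℝ) - 1 := by
          rw [Nat.cast_sub h1]; norm_num
        rw [wP_stOcc_ne x hij,
          show wM (upP x j) j
            = if m₁+m₂ ≤ j.val then ((occ x j + 1 : ℕ):ℝ) * eps x j
              else Real.sqrt ((occ x j + 1 : ℕ):ℝ) from wM_stOcc_self x j _]
        unfold cP
        rw [wP_stOcc_ne (upM x j) (Ne.symm hij),
          show wP (upM x j) j
            = if m₁+m₂ ≤ j.val then (1 - ((occ x j - 1 : ℕ):ℝ)) * eps x j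
              else Real.sqrt (((occ x j - 1 : ℕ):ℝ)+1) from wP_stOcc_self x j _,
          show (p - (upP (upM x j) i).R : ℕ) = (p - x.R : ℕ) by
            rw [R_upP]; have := R_upM h1; omega,
          sgn_add, sgn_self, ← sgn_law hij, hc,
          show (occ x j :ℝ) - 1 + 1 = (occ x j : ℝ) by ring]
        rw [show wP x j = if m₁+m₂ ≤ j.val then (1 - (occ x j : ℝ)) * eps x j
              else Real.sqrt ((occ x j : ℝ) + 1) from rfl,
          show wM x j = if m₁+m₂ ≤ j.val then (occ x j : ℝ) * eps x j
              else Real.sqrt (occ x j : ℝ) from rfl]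
        push_cast
        split_ifs with hfj
        · have hocc : occ x j = 1 := le_antisymm (occ_le_one hx hfj) h1
          rw [hocc]
          push_cast
          linear_combination (sf j i * sf j i * eps x j * eps x j * wP x i
              * Real.sqrt ((p - x.R : ℕ) : ℝ)) * sf_sq i j
            + (eps x j * eps x j * wP x i * Real.sqrt ((p - x.R : ℕ) : ℝ)) * sf_sq j i
            + (wP x i * Real.sqrt ((p - x.R : ℕ) : ℝ)) * eps_sq x j
        · have hC : Real.sqrt ((occ x j : ℝ) + 1) * Real.sqrt ((occ x j : ℝ) + 1)
              = (occ x j : ℝ) + 1 := msq (by positivity)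
          have hA : Real.sqrt (occ x j : ℝ) * Real.sqrt (occ x j : ℝ)
              = (occ x j : ℝ) := msq (by positivity)
          linear_combination (sf i j * sf i j * wP x i * Real.sqrt ((p - x.R : ℕ) : ℝ)) * hC
            - (sf i j * sf i j * sf j i * sf j i * wP x i
                * Real.sqrt ((p - x.R : ℕ) : ℝ)) * hA
            + (wP x i * Real.sqrt ((p - x.R : ℕ) : ℝ)) * sf_sq i j
            - (sf i j * sf i j * (occ x j : ℝ) * wP x i
                * Real.sqrt ((p - x.R : ℕ) : ℝ)) * sf_sq j i
    · rw [if_neg hjk, bvec_eq_zero (zero_mul (cP p x i))]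
      by_cases hik : i = k
      · subst hik
        rw [show upM (upP x i) j = upP (upM x j) i from (upP_upM_comm x hij).symm]
        by_cases h0 : occ x j = 0
        · rw [bvec_eq_zero (show cP p x i * (sf i j * wP (upP x i) i * wM (upP x i) j) = 0 by
              rw [wM_stOcc_ne x (Ne.symm hij), wM_zero h0]; ring),
            bvec_eq_zero (show sgn (deg i + deg j) (deg i) *
              (sf i j * wP x i * wM x j * cP p (upP (upM x j) i) i) = 0 by
                rw [wM_zero h0]; ring), sub_zero]
        · have h1 : 1 ≤ occ x j := by omega
          rw [bvec_sub]
          apply bvec_eq_zero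
          rw [wM_stOcc_ne x (Ne.symm hij),
            show wP (upP x i) i
              = if m₁+m₂ ≤ i.val then (1 - ((occ x i + 1 : ℕ):ℝ)) * eps x i
                else Real.sqrt (((occ x i + 1 : ℕ):ℝ)+1) from wP_stOcc_self x i _]
          unfold cP
          rw [show wP (upP (upM x j) i) i
              = if m₁+m₂ ≤ i.val then (1 - ((occ (upM x j) i + 1 : ℕ):ℝ)) * eps (upM x j) i
                else Real.sqrt (((occ (upM x j) i + 1 : ℕ):ℝ)+1) from wP_stOcc_self _ i _,
            occ_upM_ne x hij,
            show eps (upM x j) i = eps x i * sf i j ^ ((occ x j - 1) + occ x j) from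
              eps_stOcc x i j _,
            sf_pow_odd (by omega),
            show (p - (upP (upM x j) i).R : ℕ) = (p - x.R : ℕ) by
              rw [R_upP]; have := R_upM h1; omega,
            sgn_add, sgn_self,
            show sgn (deg j) (deg i) = sf i j * sf j i by rw [sgn_comm, ← sgn_law hij]]
          rw [show wP x i = if m₁+m₂ ≤ i.val then (1 - (occ x i : ℝ)) * eps x i
                else Real.sqrt ((occ x i : ℝ) + 1) from rfl]
          push_cast
          split_ifs with hfi
          · rcases (show occ x i = 0 ∨ occ x i = 1 by
                have := occ_le_one hx hfi; omega) with h | h <;> rw [h] <;> push_cast <;> ring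
          · rw [sf_bos (by omega) j]
            ring
      · -- all distinct
        rw [show upM (upP x k) j = upP (upM x j) k from (upP_upM_comm x (fun h =>
              hjk h.symm)).symm,
          upP_upP_comm (upM x j) hik]
        by_cases h0 : occ x j = 0
        · rw [bvec_eq_zero (show cP p x k * (sf i j * wP (upP x k) i * wM (upP x k) j) = 0 by
              rw [wM_stOcc_ne x (fun h => hjk h), wM_zero h0]; ring),
            bvec_eq_zero (show sgn (deg i + deg j) (deg k) *
              (sf i j * wP x i * wM x j * cP p (upP (upM x j) i) k) = 0 by
                rw [wM_zero h0]; ring), sub_zero]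
        · have h1 : 1 ≤ occ x j := by omega
          rw [bvec_sub]
          apply bvec_eq_zero
          rw [wM_stOcc_ne x (fun h => hjk h), wP_stOcc_ne x hik]
          unfold cP
          rw [wP_stOcc_ne (upM x j) (fun h => hik h.symm),
            wP_stOcc_ne' x (fun h => hjk h.symm) h1,
            show (p - (upP (upM x j) i).R : ℕ) = (p - x.R : ℕ) by
              rw [R_upP]; have := R_upM h1; omega,
            sgn_add, ← sgn_law hik, ← sgn_law hjk]
          linear_combination (- (sf i j * sf i k * sf j k * sf k j * sf k j * wP x i * wM x j
              * wP x k * Real.sqrt ((p - x.R : ℕ) : ℝ))) * sf_sq k i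
            - (sf i j * sf i k * sf j k * wP x i * wM x j * wP x k
              * Real.sqrt ((p - x.R : ℕ) : ℝ)) * sf_sq k j

end Fock
namespace Fock

variable {m₁ m₂ n₁ n₂ p : ℕ}

lemma rel3 (i j k : Fin (m₁+m₂+n₁+n₂)) :
    bb (deg i + deg j) (deg k) (bb (deg i) (deg j) (aP (p := p) i) (aM j)) (aM k)
      = -(sgn (deg i + deg j) (deg k) • ((if i = k then (1 : ℝ) else 0) • aM j)) -
          sgn (deg i) (deg i) • ((if i = j then (1 : ℝ) else 0) • aM k) := by
  apply op_ext
  rintro ⟨x, hx⟩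
  have hxle : x.R ≤ p := hx.2.2
  rw [show bb (deg i + deg j) (deg k) (bb (deg i) (deg j) (aP (p := p) i) (aM j)) (aM k)
      = (bb (deg i) (deg j) (aP i) (aM j)) ∘ₗ (aM k)
        - sgn (deg i + deg j) (deg k) • ((aM k) ∘ₗ (bb (deg i) (deg j) (aP i) (aM j)))
      from rfl]
  rw [LinearMap.sub_apply, LinearMap.smul_apply, LinearMap.comp_apply, LinearMap.comp_apply,
    aM_shift k ⟨x,hx⟩, inner_shift i j ⟨x,hx⟩,
    shift_bvec (inner_shift i j) (fun _ => valid_upM hx k),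
    shift_bvec (aM_shift k) (fun h => Cij_ne hx h),
    bvec_smul,
    LinearMap.sub_apply, LinearMap.neg_apply, LinearMap.smul_apply, LinearMap.smul_apply,
    LinearMap.smul_apply, LinearMap.smul_apply,
    aM_shift j ⟨x,hx⟩, aM_shift k ⟨x,hx⟩, bvec_smul, bvec_smul, bvec_smul, bvec_smul]
  try dsimp only
  by_cases hij : i = j
  · subst hij
    simp only [Tij, Cij, eq_self_iff_true, if_true]
    rw [deg_add_self i, sgn_zero, one_mul]
    by_cases hik : i = k
    · subst hik
      rw [if_pos rfl, sgn_self, bvec_sub, bvec_neg, bvec_sub]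
      apply bvec_congr rfl
      by_cases h0 : occ x i = 0
      · have e0 : cM p x i = 0 := by unfold cM; rw [wM_zero h0]; ring
        rw [e0]; ring
      · have h1 : 1 ≤ occ x i := by omega
        unfold Cd
        rw [eq_upM h1 hxle, occ_upM_self,
          show ((occ x i - 1 : ℕ) : ℝ) = (occ x i : ℝ) - 1 by rw [Nat.cast_sub h1]; norm_num]
        split_ifs <;> ring
    · rw [if_neg hik, sgn_self,
        bvec_eq_zero (show (1:ℝ) * (0 * cM p x i) = 0 by ring), neg_zero, zero_sub,
        bvec_sub, bvec_neg]
      apply bvec_congr rfl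
      by_cases h0 : occ x k = 0
      · have e0 : cM p x k = 0 := by unfold cM; rw [wM_zero h0]; ring
        rw [e0]; ring
      · have h1 : 1 ≤ occ x k := by omega
        unfold Cd
        rw [eq_upM h1 hxle, occ_upM_ne x hik]
        split_ifs <;> ring
  · simp only [Tij, Cij, if_neg hij]
    rw [bvec_eq_zero (show sgn (deg i) (deg i) * ((0:ℝ) * cM p x k) = 0 by ring), sub_zero]
    by_cases hjk : j = k
    · subst hjk
      rw [if_neg hij,
        bvec_eq_zero (show sgn (deg i + deg j) (deg j) * ((0:ℝ) * cM p x j) = 0 by ring),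
        neg_zero,
        show upM (upP (upM x j) i) j = upP (upM (upM x j) j) i from
          (upP_upM_comm (upM x j) hij).symm,
        bvec_sub]
      apply bvec_eq_zero
      by_cases h0j : occ x j = 0
      · have e0 : cM p x j = 0 := by unfold cM; rw [wM_zero h0j]; ring
        rw [e0, wM_zero h0j]; ring
      · have h1j : 1 ≤ occ x j := by omega
        have hc : ((occ x j - 1 : ℕ) : ℝ) = (occ x j : ℝ) - 1 := by
          rw [Nat.cast_sub h1j]; norm_num
        unfold cM
        rw [wP_stOcc_ne' x hij h1j,
          show wM (upM x j) j
            = if m₁+m₂ ≤ j.val then ((occ x j - 1 : ℕ):ℝ) * eps x j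
              else Real.sqrt ((occ x j - 1 : ℕ):ℝ) from wM_stOcc_self x j _,
          show wM (upP (upM x j) i) j = sf j i * wM (upM x j) j from
            wM_stOcc_ne (upM x j) (Ne.symm hij),
          show wM (upM x j) j
            = if m₁+m₂ ≤ j.val then ((occ x j - 1 : ℕ):ℝ) * eps x j
              else Real.sqrt ((occ x j - 1 : ℕ):ℝ) from wM_stOcc_self x j _,
          show (p - (upP (upM x j) i).R : ℕ) = (p - x.R : ℕ) by
            rw [R_upP]; have := R_upM h1j; omega,
          sgn_add, sgn_self, ← sgn_law hij, hc]
        rw [show wM x j = if m₁+m₂ ≤ j.val then (occ x j : ℝ) * eps x j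
              else Real.sqrt (occ x j : ℝ) from rfl]
        split_ifs with hfj
        · have hocc : occ x j = 1 := le_antisymm (occ_le_one hx hfj) h1j
          rw [hocc]
          push_cast
          ring
        · linear_combination (- (sf i j * sf i j * wP x i * Real.sqrt (occ x j : ℝ)
            * Real.sqrt ((occ x j : ℝ) - 1)
            * Real.sqrt (((p - x.R : ℕ) : ℝ) + 1))) * sf_sq j i
    · by_cases hik : i = k
      · subst hik
        rw [if_pos rfl, upM_upP_self]
        by_cases h0i : occ x i = 0
        · rw [bvec_eq_zero (show cM p x i * (sf i j * wP (upM x i) i * wM (upM x i) j) = 0 by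
              unfold cM; rw [wM_zero h0i]; ring), zero_sub, bvec_neg, bvec_neg]
          apply bvec_congr rfl
          have key : sf i j * wP x i * wM x j * cM p (upP (upM x j) i) i = 1 * cM p x j := by
            by_cases h0j : occ x j = 0
            · have e0 : cM p x j = 0 := by unfold cM; rw [wM_zero h0j]; ring
              rw [e0, wM_zero h0j]; ring
            · have h1j : 1 ≤ occ x j := by omega
              unfold cM
              rw [show wM (upP (upM x j) i) i
                  = if m₁+m₂ ≤ i.val then ((occ (upM x j) i + 1 : ℕ):ℝ) * eps (upM x j) i
                    else Real.sqrt ((occ (upM x j) i + 1 : ℕ):ℝ) from wM_stOcc_self _ i _,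
                occ_upM_ne x hij,
                show eps (upM x j) i = eps x i * sf i j ^ ((occ x j - 1) + occ x j) from
                  eps_stOcc x i j _,
                sf_pow_odd (by omega),
                show (p - (upP (upM x j) i).R : ℕ) = (p - x.R : ℕ) by
                  rw [R_upP]; have := R_upM h1j; omega]
              rw [show wP x i = if m₁+m₂ ≤ i.val then (1 - (occ x i : ℝ)) * eps x i
                    else Real.sqrt ((occ x i : ℝ) + 1) from rfl, h0i]
              push_cast
              split_ifs with hfi
              · linear_combination (sf i j * sf i j * wM x j
                    * Real.sqrt (((p - x.R : ℕ) : ℝ) + 1)) * eps_sq x i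
                  + (wM x j * Real.sqrt (((p - x.R : ℕ) : ℝ) + 1)) * sf_sq i j
              · rw [sf_bos (by omega) j, show (0:ℝ)+1 = 1 by norm_num, Real.sqrt_one]
                ring
          rw [key]
        · have h1i : 1 ≤ occ x i := by omega
          rw [show upP (upM (upM x i) j) i = upM x j by
              rw [← upM_upM_comm x hij]
              exact upP_upM_self (show 1 ≤ occ (upM x j) i by
                rw [occ_upM_ne x hij]; exact h1i),
            bvec_sub, bvec_neg]
          apply bvec_congr rfl
          by_cases h0j : occ x j = 0
          · have e0 : cM p x j = 0 := by unfold cM; rw [wM_zero h0j]; ring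
            rw [e0,
              show wM (upM x i) j = sf j i * wM x j from wM_stOcc_ne' x (Ne.symm hij) h1i,
              wM_zero h0j,
              show cM p (upP (upM x j) i) i
                = wM (upP (upM x j) i) i
                  * Real.sqrt (((p - (upP (upM x j) i).R : ℕ) : ℝ) + 1) from rfl]
            ring
          · have h1j : 1 ≤ occ x j := by omega
            have hc : ((occ x i - 1 : ℕ) : ℝ) = (occ x i : ℝ) - 1 := by
              rw [Nat.cast_sub h1i]; norm_num
            unfold cM
            rw [show wM (upM x i) j = sf j i * wM x j from wM_stOcc_ne' x (Ne.symm hij) h1i,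
              show wP (upM x i) i
                = if m₁+m₂ ≤ i.val then (1 - ((occ x i - 1 : ℕ):ℝ)) * eps x i
                  else Real.sqrt (((occ x i - 1 : ℕ):ℝ)+1) from wP_stOcc_self x i _,
              show wM (upP (upM x j) i) i
                = if m₁+m₂ ≤ i.val then ((occ (upM x j) i + 1 : ℕ):ℝ) * eps (upM x j) i
                  else Real.sqrt ((occ (upM x j) i + 1 : ℕ):ℝ) from wM_stOcc_self _ i _,
              occ_upM_ne x hij,
              show eps (upM x j) i = eps x i * sf i j ^ ((occ x j - 1) + occ x j) from
                eps_stOcc x i j _,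
              sf_pow_odd (by omega),
              show (p - (upP (upM x j) i).R : ℕ) = (p - x.R : ℕ) by
                rw [R_upP]; have := R_upM h1j; omega,
              sgn_add, sgn_self,
              show sgn (deg j) (deg i) = sf i j * sf j i by rw [sgn_comm, ← sgn_law hij],
              hc]
            rw [show wP x i = if m₁+m₂ ≤ i.val then (1 - (occ x i : ℝ)) * eps x i
                  else Real.sqrt ((occ x i : ℝ) + 1) from rfl,
              show wM x i = if m₁+m₂ ≤ i.val then (occ x i : ℝ) * eps x i
                  else Real.sqrt (occ x i : ℝ) from rfl]
            push_cast
            split_ifs with hfi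
            · have hocc : occ x i = 1 := le_antisymm (occ_le_one hx hfi) h1i
              rw [hocc]
              push_cast
              linear_combination (sf i j * sf j i * wM x j
                * Real.sqrt (((p - x.R : ℕ) : ℝ) + 1)) * eps_sq x i
            · rw [sf_bos (by omega) j,
                show (occ x i : ℝ) - 1 + 1 = (occ x i : ℝ) by ring]
              have hA : Real.sqrt (occ x i : ℝ) * Real.sqrt (occ x i : ℝ) = (occ x i : ℝ) :=
                msq (by positivity)
              have hC : Real.sqrt ((occ x i : ℝ) + 1) * Real.sqrt ((occ x i : ℝ) + 1)
                  = (occ x i : ℝ) + 1 := msq (by positivity)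
              linear_combination (sf j i * wM x j
                  * Real.sqrt (((p - x.R : ℕ) : ℝ) + 1)) * hA
                - (sf j i * wM x j * Real.sqrt (((p - x.R : ℕ) : ℝ) + 1)) * hC
      · -- all distinct
        rw [if_neg hik,
          bvec_eq_zero (show sgn (deg i + deg j) (deg k) * ((0:ℝ) * cM p x j) = 0 by ring),
          neg_zero,
          show upM (upM x k) j = upM (upM x j) k from upM_upM_comm x (fun h => hjk h),
          show upM (upP (upM x j) i) k = upP (upM (upM x j) k) i from
            (upP_upM_comm (upM x j) hik).symm,
          bvec_sub]
        apply bvec_eq_zero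
        by_cases h0k : occ x k = 0
        · have e0 : cM p x k = 0 := by unfold cM; rw [wM_zero h0k]; ring
          have e1 : cM p (upP (upM x j) i) k = 0 := by
            unfold cM
            rw [wM_zero (show occ (upP (upM x j) i) k = 0 by
              rw [occ_upP_ne _ (fun h => hik h.symm), occ_upM_ne x (fun h => hjk h.symm)]
              exact h0k)]
            ring
          rw [e0, e1]; ring
        · have h1k : 1 ≤ occ x k := by omega
          by_cases h0j : occ x j = 0
          · rw [wM_zero h0j,
              wM_zero (show occ (upM x k) j = 0 by
                rw [occ_upM_ne x (fun h => hjk h)]; exact h0j)]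
            ring
          · have h1j : 1 ≤ occ x j := by omega
            unfold cM
            rw [wP_stOcc_ne' x hik h1k, wM_stOcc_ne' x (fun h => hjk h) h1k,
              show wM (upP (upM x j) i) k = sf k i * wM (upM x j) k from
                wM_stOcc_ne (upM x j) (fun h => hik h.symm),
              show wM (upM x j) k = sf k j * wM x k from
                wM_stOcc_ne' x (fun h => hjk h.symm) h1j,
              show (p - (upP (upM x j) i).R : ℕ) = (p - x.R : ℕ) by
                rw [R_upP]; have := R_upM h1j; omega,
              sgn_add, ← sgn_law hik, ← sgn_law hjk]
            linear_combination (- (sf i j * sf i k * sf j k * sf k j * sf k j * wP x i * wM x j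
                * wM x k * Real.sqrt (((p - x.R : ℕ) : ℝ) + 1))) * sf_sq k i
              - (sf i j * sf i k * sf j k * wP x i * wM x j * wM x k
                * Real.sqrt (((p - x.R : ℕ) : ℝ) + 1)) * sf_sq k j

end Fock

theorem fock_operators_satisfy_triple_relations (m₁ m₂ n₁ n₂ p : ℕ) (hp : 0 < p) :
    ∀ i j k : Fin (m₁+m₂+n₁+n₂),
      (bb (deg i) (deg j) (aP (p := p) i) (aP j) = 0 ∧
       bb (deg i) (deg j) (aM (p := p) i) (aM j) = 0) ∧
      bb (deg i + deg j) (deg k) (bb (deg i) (deg j) (aP (p := p) i) (aM j)) (aP k) =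
        (if j = k then (1 : ℝ) else 0) • aP i +
          sgn (deg i) (deg i) • ((if i = j then (1 : ℝ) else 0) • aP k) ∧
      bb (deg i + deg j) (deg k) (bb (deg i) (deg j) (aP (p := p) i) (aM j)) (aM k) =
        -(sgn (deg i + deg j) (deg k) • ((if i = k then (1 : ℝ) else 0) • aM j)) -
          sgn (deg i) (deg i) • ((if i = j then (1 : ℝ) else 0) • aM k) := by
  intro i j k
  exact ⟨⟨Fock.rel1P i j, Fock.rel1M i j⟩, Fock.rel2 i j k, Fock.rel3 i j k⟩
end

section
/- The Fock module W_p is irreducible under the action of the operators a_i^± (i = 1,…,m+n): the only subspaces of W_p invariant under all of the operators a_1^±,…,a_{m+n}^± are {0} and W_p itself. Equivalently, for any nonzero vector x ∈ W_p, the smallest subspace containing x and invariant under all a_i^± equals W_p. -/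
section Aux

variable {m₁ m₂ n₁ n₂ p : ℕ}

/-- Unified occupation number at index `i`. -/
def occ (i : Fin (m₁+m₂+n₁+n₂)) (x : FLabel m₁ m₂ n₁ n₂) : ℕ :=
  if h1 : i.val < m₁ then x.r ⟨i.val, h1⟩
  else if h2 : i.val < m₁ + m₂ then x.l ⟨i.val - m₁, by omega⟩
  else if h3 : i.val < m₁ + m₂ + n₁ then x.th ⟨i.val - (m₁ + m₂), by omega⟩
  else x.la ⟨i.val - (m₁ + m₂ + n₁), by have := i.isLt; omega⟩

/-- Lower the occupation at index `i` by one. -/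
def low (i : Fin (m₁+m₂+n₁+n₂)) (x : FLabel m₁ m₂ n₁ n₂) : FLabel m₁ m₂ n₁ n₂ :=
  if h1 : i.val < m₁ then { x with r := Function.update x.r ⟨i.val, h1⟩ (x.r ⟨i.val, h1⟩ - 1) }
  else if h2 : i.val < m₁ + m₂ then
    { x with l := (Function.update x.l ⟨i.val - m₁, by omega⟩ (x.l ⟨i.val - m₁, by omega⟩ - 1)) }
  else if h3 : i.val < m₁ + m₂ + n₁ then
    { x with th := (Function.update x.th ⟨i.val - (m₁ + m₂), by omega⟩
        (x.th ⟨i.val - (m₁ + m₂), by omega⟩ - 1)) }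
  else
    { x with la := (Function.update x.la ⟨i.val - (m₁ + m₂ + n₁), by have := i.isLt; omega⟩
        (x.la ⟨i.val - (m₁ + m₂ + n₁), by have := i.isLt; omega⟩ - 1)) }

/-- Raise the occupation at index `i` by one. -/
def rai (i : Fin (m₁+m₂+n₁+n₂)) (x : FLabel m₁ m₂ n₁ n₂) : FLabel m₁ m₂ n₁ n₂ :=
  if h1 : i.val < m₁ then { x with r := Function.update x.r ⟨i.val, h1⟩ (x.r ⟨i.val, h1⟩ + 1) }
  else if h2 : i.val < m₁ + m₂ then
    { x with l := (Function.update x.l ⟨i.val - m₁, by omega⟩ (x.l ⟨i.val - m₁, by omega⟩ + 1)) }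
  else if h3 : i.val < m₁ + m₂ + n₁ then
    { x with th := (Function.update x.th ⟨i.val - (m₁ + m₂), by omega⟩
        (x.th ⟨i.val - (m₁ + m₂), by omega⟩ + 1)) }
  else
    { x with la := (Function.update x.la ⟨i.val - (m₁ + m₂ + n₁), by have := i.isLt; omega⟩
        (x.la ⟨i.val - (m₁ + m₂ + n₁), by have := i.isLt; omega⟩ + 1)) }

lemma sum_update_add_self {k : ℕ} (f : Fin k → ℕ) (j : Fin k) (b : ℕ) :
    (∑ i, Function.update f j b i) + f j = b + ∑ i, f i := by
  rw [Finset.sum_update_of_mem (Finset.mem_univ j)]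
  rw [← Finset.sum_erase_add Finset.univ f (Finset.mem_univ j)]
  simp [Finset.sdiff_singleton_eq_erase]
  ring

lemma R_low (i : Fin (m₁+m₂+n₁+n₂)) (x : FLabel m₁ m₂ n₁ n₂) (h : 0 < occ i x) :
    (low i x).R + 1 = x.R := by
  unfold occ low at *
  split_ifs at * with h1 h2 h3
  · have := sum_update_add_self x.r ⟨i.val, h1⟩ (x.r ⟨i.val, h1⟩ - 1)
    simp only [FLabel.R]; omega
  · have := sum_update_add_self x.l ⟨i.val - m₁, by omega⟩ (x.l ⟨i.val - m₁, by omega⟩ - 1)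
    simp only [FLabel.R]; omega
  · have := sum_update_add_self x.th ⟨i.val - (m₁ + m₂), by omega⟩
      (x.th ⟨i.val - (m₁ + m₂), by omega⟩ - 1)
    simp only [FLabel.R]; omega
  · have := sum_update_add_self x.la ⟨i.val - (m₁ + m₂ + n₁), by have := i.isLt; omega⟩
      (x.la ⟨i.val - (m₁ + m₂ + n₁), by have := i.isLt; omega⟩ - 1)
    simp only [FLabel.R]; omega

lemma R_rai (i : Fin (m₁+m₂+n₁+n₂)) (x : FLabel m₁ m₂ n₁ n₂) :
    (rai i x).R = x.R + 1 := by
  unfold rai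
  split_ifs with h1 h2 h3
  · have := sum_update_add_self x.r ⟨i.val, h1⟩ (x.r ⟨i.val, h1⟩ + 1)
    simp only [FLabel.R]; omega
  · have := sum_update_add_self x.l ⟨i.val - m₁, by omega⟩ (x.l ⟨i.val - m₁, by omega⟩ + 1)
    simp only [FLabel.R]; omega
  · have := sum_update_add_self x.th ⟨i.val - (m₁ + m₂), by omega⟩
      (x.th ⟨i.val - (m₁ + m₂), by omega⟩ + 1)
    simp only [FLabel.R]; omega
  · have := sum_update_add_self x.la ⟨i.val - (m₁ + m₂ + n₁), by have := i.isLt; omega⟩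
      (x.la ⟨i.val - (m₁ + m₂ + n₁), by have := i.isLt; omega⟩ + 1)
    simp only [FLabel.R]; omega

lemma occ_le_R (i : Fin (m₁+m₂+n₁+n₂)) (x : FLabel m₁ m₂ n₁ n₂) : occ i x ≤ x.R := by
  unfold occ
  have hr : ∀ j : Fin m₁, x.r j ≤ x.R := fun j =>
    le_trans (Finset.single_le_sum (f := x.r) (fun _ _ => Nat.zero_le _) (Finset.mem_univ j))
      (by unfold FLabel.R; omega)
  have hl : ∀ j : Fin m₂, x.l j ≤ x.R := fun j =>
    le_trans (Finset.single_le_sum (f := x.l) (fun _ _ => Nat.zero_le _) (Finset.mem_univ j))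
      (by unfold FLabel.R; omega)
  have hth : ∀ j : Fin n₁, x.th j ≤ x.R := fun j =>
    le_trans (Finset.single_le_sum (f := x.th) (fun _ _ => Nat.zero_le _) (Finset.mem_univ j))
      (by unfold FLabel.R; omega)
  have hla : ∀ j : Fin n₂, x.la j ≤ x.R := fun j =>
    le_trans (Finset.single_le_sum (f := x.la) (fun _ _ => Nat.zero_le _) (Finset.mem_univ j))
      (by unfold FLabel.R; omega)
  split_ifs <;> first | exact hr _ | exact hl _ | exact hth _ | exact hla _

lemma occ_low (i : Fin (m₁+m₂+n₁+n₂)) (x : FLabel m₁ m₂ n₁ n₂) :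
    occ i (low i x) = occ i x - 1 := by
  unfold occ low
  split_ifs <;> simp [Function.update_self]

lemma update_le_one {k : ℕ} (f : Fin k → ℕ) (j' : Fin k) (b : ℕ) (hb : b ≤ 1)
    (hf : ∀ j, f j ≤ 1) : ∀ j, Function.update f j' b j ≤ 1 := by
  intro j
  rw [Function.update_apply]
  split_ifs <;> first | exact hb | exact hf j

lemma low_valid (i : Fin (m₁+m₂+n₁+n₂)) (x : FLabel m₁ m₂ n₁ n₂) (hx : x.Valid p)
    (h : 0 < occ i x) : (low i x).Valid p := by
  obtain ⟨h1, h2, h3⟩ := hx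
  have hR := R_low i x h
  have h4 : (low i x).R ≤ p := by omega
  refine ⟨?_, ?_, h4⟩ <;>
  · intro j
    unfold low
    split_ifs <;>
      first
      | exact h1 j
      | exact h2 j
      | exact update_le_one _ _ _ (le_trans (Nat.sub_le _ _) (h1 _)) h1 j
      | exact update_le_one _ _ _ (le_trans (Nat.sub_le _ _) (h2 _)) h2 j

lemma rai_low (i : Fin (m₁+m₂+n₁+n₂)) (x : FLabel m₁ m₂ n₁ n₂) (h : 0 < occ i x) :
    rai i (low i x) = x := by
  unfold occ at h
  unfold rai low
  split_ifs at * <;>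
  · cases x
    simp_all only [Function.update_self, Function.update_idem]
    rw [Nat.sub_add_cancel h, Function.update_eq_self]

lemma R_eq_zero (x : FLabel m₁ m₂ n₁ n₂) (h : x.R = 0) :
    x = ⟨fun _ => 0, fun _ => 0, fun _ => 0, fun _ => 0⟩ := by
  unfold FLabel.R at h
  have hr : ∀ j, x.r j = 0 := fun j =>
    Finset.sum_eq_zero_iff.mp (by omega) j (Finset.mem_univ j)
  have hl : ∀ j, x.l j = 0 := fun j =>
    Finset.sum_eq_zero_iff.mp (by omega) j (Finset.mem_univ j)
  have hth : ∀ j, x.th j = 0 := fun j =>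
    Finset.sum_eq_zero_iff.mp (by omega) j (Finset.mem_univ j)
  have hla : ∀ j, x.la j = 0 := fun j =>
    Finset.sum_eq_zero_iff.mp (by omega) j (Finset.mem_univ j)
  cases x
  simp only [FLabel.mk.injEq]
  exact ⟨funext hr, funext hl, funext hth, funext hla⟩

lemma exists_occ_pos (x : FLabel m₁ m₂ n₁ n₂) (h : 0 < x.R) :
    ∃ i, 0 < occ i x := by
  by_contra hc
  push_neg at hc
  have hzero : x.R = 0 := by
    have hr : ∀ j : Fin m₁, x.r j = 0 := fun j => by
      have := hc ⟨j.val, by have := j.isLt; omega⟩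
      unfold occ at this; rw [dif_pos j.isLt] at this; simpa using this
    have hl : ∀ j : Fin m₂, x.l j = 0 := fun j => by
      have := hc ⟨m₁ + j.val, by have := j.isLt; omega⟩
      unfold occ at this
      rw [dif_neg (by simp only [Fin.val_mk]; omega),
        dif_pos (by have := j.isLt; simp only [Fin.val_mk]; omega)] at this
      simpa using this
    have hth : ∀ j : Fin n₁, x.th j = 0 := fun j => by
      have := hc ⟨m₁ + m₂ + j.val, by have := j.isLt; omega⟩
      unfold occ at this
      rw [dif_neg (by simp only [Fin.val_mk]; omega),
        dif_neg (by simp only [Fin.val_mk]; omega),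
        dif_pos (by have := j.isLt; simp only [Fin.val_mk]; omega)] at this
      simpa using this
    have hla : ∀ j : Fin n₂, x.la j = 0 := fun j => by
      have := hc ⟨m₁ + m₂ + n₁ + j.val, by have := j.isLt; omega⟩
      unfold occ at this
      rw [dif_neg (by simp only [Fin.val_mk]; omega),
        dif_neg (by simp only [Fin.val_mk]; omega),
        dif_neg (by simp only [Fin.val_mk]; omega)] at this
      simpa using this
    unfold FLabel.R
    rw [Finset.sum_congr rfl fun j _ => hr j, Finset.sum_congr rfl fun j _ => hl j,
      Finset.sum_congr rfl fun j _ => hth j, Finset.sum_congr rfl fun j _ => hla j]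
    simp
  omega

end Aux
set_option maxHeartbeats 2000000

section Ops

variable {m₁ m₂ n₁ n₂ p : ℕ}

lemma extOp_single (g : FIdx m₁ m₂ n₁ n₂ p → W m₁ m₂ n₁ n₂ p) (x : FIdx m₁ m₂ n₁ n₂ p) :
    extOp g (Finsupp.single x 1) = g x := by
  simp [extOp]

lemma bvec_valid (x' : FLabel m₁ m₂ n₁ n₂) (c : ℝ) (h : x'.Valid p) :
    bvec p x' c = c • Finsupp.single (⟨x', h⟩ : FIdx m₁ m₂ n₁ n₂ p) 1 := dif_pos h

lemma bvec_zero (x' : FLabel m₁ m₂ n₁ n₂) : bvec p x' (0:ℝ) = 0 := by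
  unfold bvec; split_ifs <;> simp

lemma sqrt_nat_ne_zero {k : ℕ} (h : 0 < k) : Real.sqrt ((k : ℕ) : ℝ) ≠ 0 :=
  ne_of_gt (Real.sqrt_pos.mpr (by exact_mod_cast h))

lemma sgnl_ne_zero (x : FLabel m₁ m₂ n₁ n₂) : sgnl x ≠ 0 := pow_ne_zero _ (by norm_num)
lemma sgnth_ne_zero (x : FLabel m₁ m₂ n₁ n₂) (j : Fin n₁) : sgnth x j ≠ 0 :=
  pow_ne_zero _ (by norm_num)
lemma sgnla_ne_zero (x : FLabel m₁ m₂ n₁ n₂) (j : Fin n₂) : sgnla x j ≠ 0 :=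
  pow_ne_zero _ (by norm_num)

lemma aM_single_zero (i : Fin (m₁+m₂+n₁+n₂)) (x : FIdx m₁ m₂ n₁ n₂ p) (h : occ i x.1 = 0) :
    aM (p := p) i (Finsupp.single x 1) = 0 := by
  unfold aM occ at *
  split_ifs at * with h1 h2 h3
  · simp [bM, extOp_single, h, bvec_zero]
  · simp [btM, extOp_single, h, bvec_zero]
  · simp [fM, extOp_single, h, bvec_zero]
  · simp [ftM, extOp_single, h, bvec_zero]

lemma bM_branch (i : Fin (m₁+m₂+n₁+n₂)) (x : FIdx m₁ m₂ n₁ n₂ p) (h : 0 < occ i x.1)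
    (h1 : i.val < m₁) :
    ∃ (c : ℝ) (y : FIdx m₁ m₂ n₁ n₂ p), c ≠ 0 ∧ y.1 = low i x.1 ∧
      aM (p := p) i (Finsupp.single x 1) = c • Finsupp.single y 1 := by
  have hv : (low i x.1).Valid p := low_valid i x.1 x.2 h
  have hl : low i x.1
      = { x.1 with r := Function.update x.1.r ⟨i.val, h1⟩ (x.1.r ⟨i.val, h1⟩ - 1) } :=
    dif_pos h1
  have ho : occ i x.1 = x.1.r ⟨i.val, h1⟩ := dif_pos h1
  have haM : aM (p := p) i = bM ⟨i.val, h1⟩ := dif_pos h1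
  rw [ho] at h
  rw [hl] at hv
  refine ⟨Real.sqrt ((x.1.r ⟨i.val, h1⟩ * (p - x.1.R + 1) : ℕ) : ℝ), ⟨_, hv⟩, ?_, hl.symm, ?_⟩
  · exact sqrt_nat_ne_zero (Nat.mul_pos h (by omega))
  · rw [haM]; unfold bM; rw [extOp_single]; exact bvec_valid _ _ hv

lemma btM_branch (i : Fin (m₁+m₂+n₁+n₂)) (x : FIdx m₁ m₂ n₁ n₂ p) (h : 0 < occ i x.1)
    (h1 : ¬ i.val < m₁) (h2 : i.val < m₁ + m₂) :
    ∃ (c : ℝ) (y : FIdx m₁ m₂ n₁ n₂ p), c ≠ 0 ∧ y.1 = low i x.1 ∧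
      aM (p := p) i (Finsupp.single x 1) = c • Finsupp.single y 1 := by
  have hv : (low i x.1).Valid p := low_valid i x.1 x.2 h
  have hl : low i x.1
      = { x.1 with l := (Function.update x.1.l ⟨i.val - m₁, by omega⟩
          (x.1.l ⟨i.val - m₁, by omega⟩ - 1)) } := by
    unfold low; rw [dif_neg h1, dif_pos h2]
  have ho : occ i x.1 = x.1.l ⟨i.val - m₁, by omega⟩ := by
    unfold occ; rw [dif_neg h1, dif_pos h2]
  have haM : aM (p := p) i = btM ⟨i.val - m₁, by omega⟩ := by
    unfold aM; rw [dif_neg h1, dif_pos h2]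
  rw [ho] at h
  rw [hl] at hv
  refine ⟨Real.sqrt ((x.1.l ⟨i.val - m₁, by omega⟩ * (p - x.1.R + 1) : ℕ) : ℝ),
    ⟨_, hv⟩, ?_, hl.symm, ?_⟩
  · exact sqrt_nat_ne_zero (Nat.mul_pos h (by omega))
  · rw [haM]; unfold btM; rw [extOp_single]; exact bvec_valid _ _ hv

lemma fM_branch (i : Fin (m₁+m₂+n₁+n₂)) (x : FIdx m₁ m₂ n₁ n₂ p) (h : 0 < occ i x.1)
    (h1 : ¬ i.val < m₁) (h2 : ¬ i.val < m₁ + m₂) (h3 : i.val < m₁ + m₂ + n₁) :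
    ∃ (c : ℝ) (y : FIdx m₁ m₂ n₁ n₂ p), c ≠ 0 ∧ y.1 = low i x.1 ∧
      aM (p := p) i (Finsupp.single x 1) = c • Finsupp.single y 1 := by
  have hv : (low i x.1).Valid p := low_valid i x.1 x.2 h
  have hl : low i x.1
      = { x.1 with th := (Function.update x.1.th ⟨i.val - (m₁ + m₂), by omega⟩
          (x.1.th ⟨i.val - (m₁ + m₂), by omega⟩ - 1)) } := by
    unfold low; rw [dif_neg h1, dif_neg h2, dif_pos h3]
  have ho : occ i x.1 = x.1.th ⟨i.val - (m₁ + m₂), by omega⟩ := by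
    unfold occ; rw [dif_neg h1, dif_neg h2, dif_pos h3]
  have haM : aM (p := p) i = fM ⟨i.val - (m₁ + m₂), by omega⟩ := by
    unfold aM; rw [dif_neg h1, dif_neg h2, dif_pos h3]
  rw [ho] at h
  rw [hl] at hv
  refine ⟨(x.1.th ⟨i.val - (m₁ + m₂), by omega⟩ : ℝ) * sgnl x.1
      * sgnth x.1 ⟨i.val - (m₁ + m₂), by omega⟩
      * Real.sqrt ((p - x.1.R + 1 : ℕ) : ℝ), ⟨_, hv⟩, ?_, hl.symm, ?_⟩
  · exact mul_ne_zero (mul_ne_zero (mul_ne_zero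
      (by exact_mod_cast Nat.pos_iff_ne_zero.mp h) (sgnl_ne_zero _))
      (sgnth_ne_zero _ _)) (sqrt_nat_ne_zero (by omega))
  · rw [haM]; unfold fM; rw [extOp_single]; exact bvec_valid _ _ hv

lemma ftM_branch (i : Fin (m₁+m₂+n₁+n₂)) (x : FIdx m₁ m₂ n₁ n₂ p) (h : 0 < occ i x.1)
    (h1 : ¬ i.val < m₁) (h2 : ¬ i.val < m₁ + m₂) (h3 : ¬ i.val < m₁ + m₂ + n₁) :
    ∃ (c : ℝ) (y : FIdx m₁ m₂ n₁ n₂ p), c ≠ 0 ∧ y.1 = low i x.1 ∧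
      aM (p := p) i (Finsupp.single x 1) = c • Finsupp.single y 1 := by
  have h4 := i.isLt
  have hv : (low i x.1).Valid p := low_valid i x.1 x.2 h
  have hl : low i x.1
      = { x.1 with la := (Function.update x.1.la ⟨i.val - (m₁ + m₂ + n₁), by omega⟩
          (x.1.la ⟨i.val - (m₁ + m₂ + n₁), by omega⟩ - 1)) } := by
    unfold low; rw [dif_neg h1, dif_neg h2, dif_neg h3]
  have ho : occ i x.1 = x.1.la ⟨i.val - (m₁ + m₂ + n₁), by omega⟩ := by
    unfold occ; rw [dif_neg h1, dif_neg h2, dif_neg h3]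
  have haM : aM (p := p) i = ftM ⟨i.val - (m₁ + m₂ + n₁), by omega⟩ := by
    unfold aM; rw [dif_neg h1, dif_neg h2, dif_neg h3]
  rw [ho] at h
  rw [hl] at hv
  refine ⟨(x.1.la ⟨i.val - (m₁ + m₂ + n₁), by omega⟩ : ℝ) * sgnl x.1
      * sgnla x.1 ⟨i.val - (m₁ + m₂ + n₁), by omega⟩
      * Real.sqrt ((p - x.1.R + 1 : ℕ) : ℝ), ⟨_, hv⟩, ?_, hl.symm, ?_⟩
  · exact mul_ne_zero (mul_ne_zero (mul_ne_zero
      (by exact_mod_cast Nat.pos_iff_ne_zero.mp h) (sgnl_ne_zero _))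
      (sgnla_ne_zero _ _)) (sqrt_nat_ne_zero (by omega))
  · rw [haM]; unfold ftM; rw [extOp_single]; exact bvec_valid _ _ hv

lemma aM_single_pos (i : Fin (m₁+m₂+n₁+n₂)) (x : FIdx m₁ m₂ n₁ n₂ p) (h : 0 < occ i x.1) :
    ∃ (c : ℝ) (y : FIdx m₁ m₂ n₁ n₂ p), c ≠ 0 ∧ y.1 = low i x.1 ∧
      aM (p := p) i (Finsupp.single x 1) = c • Finsupp.single y 1 := by
  by_cases h1 : i.val < m₁
  · exact bM_branch i x h h1
  · by_cases h2 : i.val < m₁ + m₂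
    · exact btM_branch i x h h1 h2
    · by_cases h3 : i.val < m₁ + m₂ + n₁
      · exact fM_branch i x h h1 h2 h3
      · exact ftM_branch i x h h1 h2 h3

lemma rai_valid (i : Fin (m₁+m₂+n₁+n₂)) (x : FLabel m₁ m₂ n₁ n₂) (hx : x.Valid p)
    (hR : x.R < p) (hf : m₁ + m₂ ≤ i.val → occ i x = 0) : (rai i x).Valid p := by
  obtain ⟨h1, h2, h3⟩ := hx
  have hRr := R_rai i x
  have hle : (rai i x).R ≤ p := by omega
  refine ⟨?_, ?_, hle⟩
  · intro j
    unfold rai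
    split_ifs with a1 a2 a3
    · exact h1 j
    · exact h1 j
    · have h0 : x.th ⟨i.val - (m₁ + m₂), by omega⟩ = 0 := by
        have := hf (by omega)
        unfold occ at this
        rwa [dif_neg a1, dif_neg a2, dif_pos a3] at this
      exact update_le_one _ _ _ (by omega) h1 j
    · exact h1 j
  · intro j
    unfold rai
    split_ifs with a1 a2 a3
    · exact h2 j
    · exact h2 j
    · exact h2 j
    · have h0 : x.la ⟨i.val - (m₁ + m₂ + n₁), by have := i.isLt; omega⟩ = 0 := by
        have := hf (by omega)
        unfold occ at this
        rwa [dif_neg a1, dif_neg a2, dif_neg a3] at this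
      exact update_le_one _ _ _ (by omega) h2 j

lemma bP_branch (i : Fin (m₁+m₂+n₁+n₂)) (x : FIdx m₁ m₂ n₁ n₂ p) (hR : x.1.R < p)
    (hf : m₁ + m₂ ≤ i.val → occ i x.1 = 0) (h1 : i.val < m₁) :
    ∃ (c : ℝ) (y : FIdx m₁ m₂ n₁ n₂ p), c ≠ 0 ∧ y.1 = rai i x.1 ∧
      aP (p := p) i (Finsupp.single x 1) = c • Finsupp.single y 1 := by
  have hv : (rai i x.1).Valid p := rai_valid i x.1 x.2 hR hf
  have hl : rai i x.1
      = { x.1 with r := Function.update x.1.r ⟨i.val, h1⟩ (x.1.r ⟨i.val, h1⟩ + 1) } :=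
    dif_pos h1
  have haP : aP (p := p) i = bP ⟨i.val, h1⟩ := dif_pos h1
  rw [hl] at hv
  refine ⟨Real.sqrt (((x.1.r ⟨i.val, h1⟩ + 1) * (p - x.1.R) : ℕ) : ℝ), ⟨_, hv⟩, ?_,
    hl.symm, ?_⟩
  · exact sqrt_nat_ne_zero (Nat.mul_pos (by omega) (by omega))
  · rw [haP]; unfold bP; rw [extOp_single]; exact bvec_valid _ _ hv

lemma btP_branch (i : Fin (m₁+m₂+n₁+n₂)) (x : FIdx m₁ m₂ n₁ n₂ p) (hR : x.1.R < p)
    (hf : m₁ + m₂ ≤ i.val → occ i x.1 = 0) (h1 : ¬ i.val < m₁) (h2 : i.val < m₁ + m₂) :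
    ∃ (c : ℝ) (y : FIdx m₁ m₂ n₁ n₂ p), c ≠ 0 ∧ y.1 = rai i x.1 ∧
      aP (p := p) i (Finsupp.single x 1) = c • Finsupp.single y 1 := by
  have hv : (rai i x.1).Valid p := rai_valid i x.1 x.2 hR hf
  have hl : rai i x.1
      = { x.1 with l := (Function.update x.1.l ⟨i.val - m₁, by omega⟩
          (x.1.l ⟨i.val - m₁, by omega⟩ + 1)) } := by
    unfold rai; rw [dif_neg h1, dif_pos h2]
  have haP : aP (p := p) i = btP ⟨i.val - m₁, by omega⟩ := by
    unfold aP; rw [dif_neg h1, dif_pos h2]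
  rw [hl] at hv
  refine ⟨Real.sqrt (((x.1.l ⟨i.val - m₁, by omega⟩ + 1) * (p - x.1.R) : ℕ) : ℝ),
    ⟨_, hv⟩, ?_, hl.symm, ?_⟩
  · exact sqrt_nat_ne_zero (Nat.mul_pos (by omega) (by omega))
  · rw [haP]; unfold btP; rw [extOp_single]; exact bvec_valid _ _ hv

lemma fP_branch (i : Fin (m₁+m₂+n₁+n₂)) (x : FIdx m₁ m₂ n₁ n₂ p) (hR : x.1.R < p)
    (hf : m₁ + m₂ ≤ i.val → occ i x.1 = 0) (h1 : ¬ i.val < m₁) (h2 : ¬ i.val < m₁ + m₂)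
    (h3 : i.val < m₁ + m₂ + n₁) :
    ∃ (c : ℝ) (y : FIdx m₁ m₂ n₁ n₂ p), c ≠ 0 ∧ y.1 = rai i x.1 ∧
      aP (p := p) i (Finsupp.single x 1) = c • Finsupp.single y 1 := by
  have hv : (rai i x.1).Valid p := rai_valid i x.1 x.2 hR hf
  have h0 : x.1.th ⟨i.val - (m₁ + m₂), by omega⟩ = 0 := by
    have := hf (by omega)
    unfold occ at this
    rwa [dif_neg h1, dif_neg h2, dif_pos h3] at this
  have hl : rai i x.1
      = { x.1 with th := (Function.update x.1.th ⟨i.val - (m₁ + m₂), by omega⟩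
          (x.1.th ⟨i.val - (m₁ + m₂), by omega⟩ + 1)) } := by
    unfold rai; rw [dif_neg h1, dif_neg h2, dif_pos h3]
  have haP : aP (p := p) i = fP ⟨i.val - (m₁ + m₂), by omega⟩ := by
    unfold aP; rw [dif_neg h1, dif_neg h2, dif_pos h3]
  rw [hl] at hv
  refine ⟨((1 : ℝ) - (x.1.th ⟨i.val - (m₁ + m₂), by omega⟩ : ℝ)) * sgnl x.1
      * sgnth x.1 ⟨i.val - (m₁ + m₂), by omega⟩
      * Real.sqrt ((p - x.1.R : ℕ) : ℝ), ⟨_, hv⟩, ?_, hl.symm, ?_⟩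
  · refine mul_ne_zero (mul_ne_zero (mul_ne_zero ?_ (sgnl_ne_zero _))
      (sgnth_ne_zero _ _)) (sqrt_nat_ne_zero (by omega))
    rw [h0]; norm_num
  · rw [haP]; unfold fP; rw [extOp_single]; exact bvec_valid _ _ hv

lemma ftP_branch (i : Fin (m₁+m₂+n₁+n₂)) (x : FIdx m₁ m₂ n₁ n₂ p) (hR : x.1.R < p)
    (hf : m₁ + m₂ ≤ i.val → occ i x.1 = 0) (h1 : ¬ i.val < m₁) (h2 : ¬ i.val < m₁ + m₂)
    (h3 : ¬ i.val < m₁ + m₂ + n₁) :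
    ∃ (c : ℝ) (y : FIdx m₁ m₂ n₁ n₂ p), c ≠ 0 ∧ y.1 = rai i x.1 ∧
      aP (p := p) i (Finsupp.single x 1) = c • Finsupp.single y 1 := by
  have h4 := i.isLt
  have hv : (rai i x.1).Valid p := rai_valid i x.1 x.2 hR hf
  have h0 : x.1.la ⟨i.val - (m₁ + m₂ + n₁), by omega⟩ = 0 := by
    have := hf (by omega)
    unfold occ at this
    rwa [dif_neg h1, dif_neg h2, dif_neg h3] at this
  have hl : rai i x.1
      = { x.1 with la := (Function.update x.1.la ⟨i.val - (m₁ + m₂ + n₁), by omega⟩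
          (x.1.la ⟨i.val - (m₁ + m₂ + n₁), by omega⟩ + 1)) } := by
    unfold rai; rw [dif_neg h1, dif_neg h2, dif_neg h3]
  have haP : aP (p := p) i = ftP ⟨i.val - (m₁ + m₂ + n₁), by omega⟩ := by
    unfold aP; rw [dif_neg h1, dif_neg h2, dif_neg h3]
  rw [hl] at hv
  refine ⟨((1 : ℝ) - (x.1.la ⟨i.val - (m₁ + m₂ + n₁), by omega⟩ : ℝ)) * sgnl x.1
      * sgnla x.1 ⟨i.val - (m₁ + m₂ + n₁), by omega⟩
      * Real.sqrt ((p - x.1.R : ℕ) : ℝ), ⟨_, hv⟩, ?_, hl.symm, ?_⟩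
  · refine mul_ne_zero (mul_ne_zero (mul_ne_zero ?_ (sgnl_ne_zero _))
      (sgnla_ne_zero _ _)) (sqrt_nat_ne_zero (by omega))
    rw [h0]; norm_num
  · rw [haP]
    show extOp _ (Finsupp.single x 1) = _
    rw [extOp_single]
    exact bvec_valid _ _ hv

lemma aP_single (i : Fin (m₁+m₂+n₁+n₂)) (x : FIdx m₁ m₂ n₁ n₂ p) (hR : x.1.R < p)
    (hf : m₁ + m₂ ≤ i.val → occ i x.1 = 0) :
    ∃ (c : ℝ) (y : FIdx m₁ m₂ n₁ n₂ p), c ≠ 0 ∧ y.1 = rai i x.1 ∧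
      aP (p := p) i (Finsupp.single x 1) = c • Finsupp.single y 1 := by
  by_cases h1 : i.val < m₁
  · exact bP_branch i x hR hf h1
  · by_cases h2 : i.val < m₁ + m₂
    · exact btP_branch i x hR hf h1 h2
    · by_cases h3 : i.val < m₁ + m₂ + n₁
      · exact fP_branch i x hR hf h1 h2 h3
      · exact ftP_branch i x hR hf h1 h2 h3

end Ops
section Main

variable {m₁ m₂ n₁ n₂ p : ℕ}

/-- The vacuum label. -/
def vacL : FLabel m₁ m₂ n₁ n₂ := ⟨fun _ => 0, fun _ => 0, fun _ => 0, fun _ => 0⟩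

lemma vacL_R : (vacL : FLabel m₁ m₂ n₁ n₂).R = 0 := by simp [vacL, FLabel.R]

lemma vacL_valid : (vacL : FLabel m₁ m₂ n₁ n₂).Valid p :=
  ⟨fun _ => by simp [vacL], fun _ => by simp [vacL], by rw [vacL_R]; exact Nat.zero_le p⟩

/-- The vacuum basis index. -/
def vac : FIdx m₁ m₂ n₁ n₂ p := ⟨vacL, vacL_valid⟩

lemma eq_vac_of_R_eq_zero (x : FIdx m₁ m₂ n₁ n₂ p) (h : x.1.R = 0) : x = vac :=
  Subtype.ext (R_eq_zero x.1 h)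

/-- Decomposition of a vector into basis vectors. -/
lemma decomp (v : W m₁ m₂ n₁ n₂ p) :
    v = ∑ x ∈ v.support, v x • Finsupp.single x (1:ℝ) := by
  have h1 : ∀ x : FIdx m₁ m₂ n₁ n₂ p, Finsupp.single x (v x) = v x • Finsupp.single x (1:ℝ) :=
    fun x => by rw [Finsupp.smul_single, smul_eq_mul, mul_one]
  calc v = v.sum Finsupp.single := (Finsupp.sum_single v).symm
    _ = ∑ x ∈ v.support, Finsupp.single x (v x) := rfl
    _ = ∑ x ∈ v.support, v x • Finsupp.single x (1:ℝ) :=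
        Finset.sum_congr rfl fun x _ => h1 x

/-- The total weight of a vector. -/
noncomputable def wt (v : W m₁ m₂ n₁ n₂ p) : ℕ := ∑ x ∈ v.support, x.1.R

lemma occ_ferm_le_one (i : Fin (m₁+m₂+n₁+n₂)) (x : FLabel m₁ m₂ n₁ n₂) (hx : x.Valid p)
    (hge : m₁ + m₂ ≤ i.val) : occ i x ≤ 1 := by
  unfold occ
  split_ifs with h1 h2 h3
  · exact absurd h1 (by omega)
  · exact absurd h2 (by omega)
  · exact hx.1 _
  · exact hx.2.1 _

open Classical in
lemma vac_mem (U : Submodule ℝ (W m₁ m₂ n₁ n₂ p))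
    (hU : ∀ i : Fin (m₁+m₂+n₁+n₂), ∀ v ∈ U, aP (p := p) i v ∈ U ∧ aM (p := p) i v ∈ U) :
    ∀ N, ∀ v : W m₁ m₂ n₁ n₂ p, v ∈ U → v ≠ 0 → wt v ≤ N →
      Finsupp.single (vac : FIdx m₁ m₂ n₁ n₂ p) (1:ℝ) ∈ U := by
  have zero_case : ∀ v : W m₁ m₂ n₁ n₂ p, v ∈ U → v ≠ 0 →
      (∀ x ∈ v.support, x.1.R = 0) →
      Finsupp.single (vac : FIdx m₁ m₂ n₁ n₂ p) (1:ℝ) ∈ U := by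
    intro v hvU hv0 hall
    have hsub : v.support ⊆ {vac} := fun x hx =>
      Finset.mem_singleton.mpr (eq_vac_of_R_eq_zero x (hall x hx))
    have hv : v = Finsupp.single vac (v vac) := Finsupp.eq_single_iff.mpr ⟨hsub, rfl⟩
    have hne : v vac ≠ 0 := by
      intro h0
      apply hv0
      rw [hv, h0, Finsupp.single_zero]
    have hv1 : Finsupp.single (vac : FIdx m₁ m₂ n₁ n₂ p) (1:ℝ) = (v vac)⁻¹ • v := by
      conv_rhs => rw [hv]
      rw [Finsupp.smul_single, smul_eq_mul, Finsupp.single_eq_same, inv_mul_cancel₀ hne]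
    rw [hv1]
    exact U.smul_mem _ hvU
  intro N
  induction N with
  | zero =>
    intro v hvU hv0 hwt
    refine zero_case v hvU hv0 fun x hx => ?_
    have : x.1.R ≤ wt v :=
      Finset.single_le_sum (f := fun x : FIdx m₁ m₂ n₁ n₂ p => x.1.R)
        (fun _ _ => Nat.zero_le _) hx
    omega
  | succ N ih =>
    intro v hvU hv0 hwt
    by_cases hall : ∀ x ∈ v.support, x.1.R = 0
    · exact zero_case v hvU hv0 hall
    · push_neg at hall
      obtain ⟨y, hy, hyR⟩ := hall
      obtain ⟨i, hi⟩ := exists_occ_pos y.1 (by omega)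
      -- decomposition of aM i v
      have hv' : aM (p := p) i v
          = ∑ x ∈ v.support, v x • aM (p := p) i (Finsupp.single x (1:ℝ)) := by
        conv_lhs => rw [decomp v]
        rw [map_sum]
        simp only [map_smul]
      -- the target index
      obtain ⟨c, y₀, hc, hy₀, hEq⟩ := aM_single_pos i y hi
      -- auxiliary: other terms vanish at y₀
      have hother : ∀ x ∈ v.support, x ≠ y →
          (v x • aM (p := p) i (Finsupp.single x (1:ℝ))) y₀ = 0 := by
        intro x hx hxy
        by_cases hox : 0 < occ i x.1
        · obtain ⟨c', y', hc', hy', hEq'⟩ := aM_single_pos i x hox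
          have hne : y' ≠ y₀ := by
            intro he
            apply hxy
            apply Subtype.ext
            have : low i x.1 = low i y.1 := by rw [← hy', he, hy₀]
            have := congrArg (rai i) this
            rwa [rai_low i x.1 hox, rai_low i y.1 hi] at this
          rw [hEq', Finsupp.smul_apply, Finsupp.smul_apply,
            Finsupp.single_eq_of_ne' hne]
          simp
        · rw [aM_single_zero i x (by omega)]
          simp
      -- coefficient of aM i v at y₀
      have hcoef : (aM (p := p) i v) y₀ = v y * c := by
        rw [hv', Finsupp.finset_sum_apply]
        rw [Finset.sum_eq_single_of_mem y hy hother]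
        rw [hEq, Finsupp.smul_apply, Finsupp.smul_apply, Finsupp.single_eq_same]
        simp [mul_comm]
      have hvy : v y ≠ 0 := Finsupp.mem_support_iff.mp hy
      have hne' : aM (p := p) i v ≠ 0 := by
        intro h0
        rw [h0] at hcoef
        simp only [Finsupp.coe_zero, Pi.zero_apply] at hcoef
        exact hc (by
          rcases mul_eq_zero.mp hcoef.symm with h | h
          · exact absurd h hvy
          · exact h)
      -- weight decreases
      set T := v.support.filter (fun x => 0 < occ i x.1) with hT
      have hyT : y ∈ T := Finset.mem_filter.mpr ⟨hy, hi⟩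
      set lowF : FIdx m₁ m₂ n₁ n₂ p → FIdx m₁ m₂ n₁ n₂ p := fun x =>
        if h : 0 < occ i x.1 then ⟨low i x.1, low_valid i x.1 x.2 h⟩ else x with hlowF
      have hlowF1 : ∀ x, 0 < occ i x.1 → (lowF x).1 = low i x.1 := by
        intro x hx
        rw [hlowF]
        exact congrArg Subtype.val (dif_pos hx)
      have hsupp : (aM (p := p) i v).support ⊆ T.image lowF := by
        intro w hw
        rw [Finsupp.mem_support_iff] at hw
        by_contra hwim
        apply hw
        rw [hv', Finsupp.finset_sum_apply]
        apply Finset.sum_eq_zero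
        intro x hx
        by_cases hox : 0 < occ i x.1
        · obtain ⟨c', y', hc', hy', hEq'⟩ := aM_single_pos i x hox
          have hy'F : y' = lowF x := Subtype.ext (by rw [hy', hlowF1 x hox])
          have : y' ∈ T.image lowF := hy'F ▸ Finset.mem_image_of_mem lowF
            (Finset.mem_filter.mpr ⟨hx, hox⟩)
          have hne : y' ≠ w := fun he => hwim (he ▸ this)
          rw [hEq', Finsupp.smul_apply, Finsupp.smul_apply,
            Finsupp.single_eq_of_ne' hne]
          simp
        · rw [aM_single_zero i x (by omega)]
          simp
      have hinj : ∀ x ∈ T, ∀ z ∈ T, lowF x = lowF z → x = z := by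
        intro x hx z hz he
        have hox := (Finset.mem_filter.mp hx).2
        have hoz := (Finset.mem_filter.mp hz).2
        apply Subtype.ext
        have h1 : low i x.1 = low i z.1 := by
          rw [← hlowF1 x hox, ← hlowF1 z hoz, he]
        have := congrArg (rai i) h1
        rwa [rai_low i x.1 hox, rai_low i z.1 hoz] at this
      have hwt' : wt (aM (p := p) i v) < wt v := by
        have s1 : wt (aM (p := p) i v) ≤ ∑ w ∈ T.image lowF, w.1.R :=
          Finset.sum_le_sum_of_subset hsupp
        have s2 : ∑ w ∈ T.image lowF, w.1.R = ∑ x ∈ T, (lowF x).1.R :=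
          Finset.sum_image hinj
        have s3 : ∑ x ∈ T, (lowF x).1.R < ∑ x ∈ T, x.1.R := by
          apply Finset.sum_lt_sum_of_nonempty ⟨y, hyT⟩
          intro x hx
          have hox := (Finset.mem_filter.mp hx).2
          have hR1 := R_low i x.1 hox
          rw [hlowF1 x hox]
          omega
        have s4 : ∑ x ∈ T, x.1.R ≤ wt v :=
          Finset.sum_le_sum_of_subset (Finset.filter_subset _ _)
        omega
      exact ih (aM (p := p) i v) (hU i v hvU).2 hne' (by omega)

open Classical in
lemma single_mem (U : Submodule ℝ (W m₁ m₂ n₁ n₂ p))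
    (hU : ∀ i : Fin (m₁+m₂+n₁+n₂), ∀ v ∈ U, aP (p := p) i v ∈ U ∧ aM (p := p) i v ∈ U)
    (hvac : Finsupp.single (vac : FIdx m₁ m₂ n₁ n₂ p) (1:ℝ) ∈ U) :
    ∀ N, ∀ x : FIdx m₁ m₂ n₁ n₂ p, x.1.R ≤ N → Finsupp.single x (1:ℝ) ∈ U := by
  intro N
  induction N with
  | zero =>
    intro x hx
    rw [eq_vac_of_R_eq_zero x (by omega)]
    exact hvac
  | succ N ih =>
    intro x hx
    by_cases h0 : x.1.R = 0
    · rw [eq_vac_of_R_eq_zero x h0]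
      exact hvac
    · obtain ⟨i, hi⟩ := exists_occ_pos x.1 (by omega)
      have hyv : (low i x.1).Valid p := low_valid i x.1 x.2 hi
      set y : FIdx m₁ m₂ n₁ n₂ p := ⟨low i x.1, hyv⟩ with hy
      have hyR : y.1.R + 1 = x.1.R := R_low i x.1 hi
      have hyU : Finsupp.single y (1:ℝ) ∈ U := ih y (by omega)
      have hxp : x.1.R ≤ p := x.2.2.2
      have hRlt : y.1.R < p := by omega
      have hferm : m₁ + m₂ ≤ i.val → occ i y.1 = 0 := by
        intro hge
        have h1 : occ i x.1 ≤ 1 := occ_ferm_le_one (p := p) i x.1 x.2 hge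
        have h2 : occ i y.1 = occ i x.1 - 1 := occ_low i x.1
        omega
      obtain ⟨c, z, hc, hz1, hEq⟩ := aP_single i y hRlt hferm
      have hz : z = x := Subtype.ext (by rw [hz1]; exact rai_low i x.1 hi)
      have hm : aP (p := p) i (Finsupp.single y (1:ℝ)) ∈ U := (hU i _ hyU).1
      rw [hEq, hz] at hm
      have hs : Finsupp.single x (1:ℝ) = c⁻¹ • (c • Finsupp.single x (1:ℝ)) := by
        rw [smul_smul, inv_mul_cancel₀ hc, one_smul]
      rw [hs]
      exact U.smul_mem _ hm

end Main

theorem fock_module_irreducible (m₁ m₂ n₁ n₂ p : ℕ) (hp : 0 < p) :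
    ∀ U : Submodule ℝ (W m₁ m₂ n₁ n₂ p),
      (∀ i : Fin (m₁+m₂+n₁+n₂), ∀ v ∈ U, aP (p := p) i v ∈ U ∧ aM (p := p) i v ∈ U) →
      U = ⊥ ∨ U = ⊤ := by
  intro U hU
  by_cases hbot : U = ⊥
  · exact Or.inl hbot
  · right
    obtain ⟨v, hvU, hv0⟩ := Submodule.ne_bot_iff U |>.mp hbot
    have hvac := vac_mem U hU (wt v) v hvU hv0 le_rfl
    have hsingle := single_mem U hU hvac
    rw [Submodule.eq_top_iff']
    intro w
    rw [decomp w]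
    exact Submodule.sum_mem _ fun x _ => U.smul_mem _ (hsingle x.1.R x le_rfl)
end
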